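/- arXiv:2407.14169 — 10 statements merged into one kernel-verified Lean document; each statement's English description precedes it below -/
import Mathlib

section
/- Let E be a normed space, p ≥ 1, and x : [a,b] → E a map of bounded p-variation (i.e., the supremum over all finite partitions a = t₀ < t₁ < ... < tₙ = b of ∑ᵢ ‖x(tᵢ) - x(tᵢ₋₁)‖^p is finite). Then the range x([a,b]) is precompact (totally bounded) in E, i.e., every sequence of points in the range has a Cauchy subsequence. -/
open scoped ENNReal NNReal

/-- The Wiener `p`-variation of a map `x : ℝ → E` over the interval `[a,b]`:
the supremum over all finite partitions `a = t₀ < t₁ < … < tₙ = b` of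
`∑ᵢ ‖x(tᵢ) - x(tᵢ₋₁)‖ ^ p`. -/
noncomputable def pVar {E : Type*} [NormedAddCommGroup E] (p a b : ℝ) (x : ℝ → E) : ℝ≥0∞ :=
  ⨆ (n : ℕ) (t : Fin (n + 1) → ℝ) (_ : StrictMono t) (_ : t 0 = a)
    (_ : t (Fin.last n) = b),
    ∑ i : Fin n, (‖x (t i.succ) - x (t i.castSucc)‖₊ : ℝ≥0∞) ^ p

lemma exists_separated_seq {α : Type*} [MetricSpace α] {s : Set α}
    (h : ¬ TotallyBounded s) :
    ∃ ε > 0, ∃ u : ℕ → α, (∀ n, u n ∈ s) ∧ ∀ m n, m < n → ε ≤ dist (u n) (u m) := by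
  rw [Metric.totallyBounded_iff] at h
  push_neg at h
  obtain ⟨ε, hε, hF⟩ := h
  have key : ∀ F : Finset α, ∃ z ∈ s, ∀ y ∈ F, ε ≤ dist z y := by
    intro F
    have h1 := hF F (F.finite_toSet)
    rw [Set.not_subset] at h1
    obtain ⟨z, hz, hz2⟩ := h1
    refine ⟨z, hz, fun y hy => ?_⟩
    by_contra hlt
    exact hz2 (Set.mem_biUnion hy (Metric.mem_ball.2 (lt_of_not_ge hlt)))
  classical
  choose g hg1 hg2 using key
  let L : ℕ → List α := fun n => Nat.rec [] (fun _ l => g l.toFinset :: l) n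
  have hLsucc : ∀ n, L (n + 1) = g (L n).toFinset :: L n := fun n => rfl
  refine ⟨ε, hε, fun n => g (L n).toFinset, fun n => hg1 _, ?_⟩
  have hmem : ∀ m n, m < n → g (L m).toFinset ∈ L n := by
    intro m n hmn
    induction n with
    | zero => omega
    | succ k ih =>
      rw [hLsucc]
      rcases Nat.lt_succ_iff_lt_or_eq.1 hmn with h | h
      · exact List.mem_cons_of_mem _ (ih h)
      · subst h; exact List.mem_cons_self
  intro m n hmn
  exact hg2 (L n).toFinset _ (List.mem_toFinset.2 (hmem m n hmn))

/-- Maps of bounded `p`-variation (`p ≥ 1`) have precompact (totally bounded) range. -/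
theorem pVar_totallyBounded_range {E : Type*} [NormedAddCommGroup E]
    (p a b : ℝ) (hp : 1 ≤ p) (x : ℝ → E) (hx : pVar p a b x ≠ ⊤) :
    TotallyBounded (x '' Set.Icc a b) := by
  classical
  by_contra hnt
  obtain ⟨ε, hε, u, hu, hsep⟩ := exists_separated_seq hnt
  choose s hs1 hs2 using hu
  have hab : a ≤ b := (hs1 0).1.trans (hs1 0).2
  have hsep' : ∀ j k, j ≠ k → ε ≤ dist (u j) (u k) := by
    intro j k hjk
    rcases lt_or_gt_of_ne hjk with h | h
    · rw [dist_comm]; exact hsep j k h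
    · exact hsep k j h
  have sinj : Function.Injective s := by
    intro j k hjk
    by_contra hne
    have := hsep' j k hne
    rw [← hs2 j, ← hs2 k, hjk, dist_self] at this
    exact absurd (this.trans_lt hε) (lt_irrefl _)
  set ε' : ℝ≥0 := ⟨ε, hε.le⟩ with hε'
  set c : ℝ≥0∞ := (ε' : ℝ≥0∞) ^ p with hc
  have hp0 : (0:ℝ) ≤ p := le_trans zero_le_one hp
  have hε'0 : (0:ℝ≥0∞) < (ε' : ℝ≥0∞) := by
    rw [ENNReal.coe_pos]
    exact_mod_cast hε
  have hc0 : c ≠ 0 := (ENNReal.rpow_pos hε'0 ENNReal.coe_ne_top).ne'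
  have hcT : c ≠ ⊤ := ENNReal.rpow_ne_top_of_nonneg hp0 ENNReal.coe_ne_top
  -- main claim
  have main : ∀ k : ℕ, (k : ℝ≥0∞) * c ≤ pVar p a b x := by
    intro k
    set n := k + 5 with hn
    set A : Finset ℝ := (Finset.range n).image s with hA
    set T : Finset ℝ := A ∪ {a, b} with hT
    have hTIcc : ∀ y ∈ T, y ∈ Set.Icc a b := by
      intro y hy
      rw [hT, Finset.mem_union] at hy
      rcases hy with hy | hy
      · obtain ⟨j, _, rfl⟩ := Finset.mem_image.1 hy
        exact hs1 j
      · simp only [Finset.mem_insert, Finset.mem_singleton] at hy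
        rcases hy with rfl | rfl
        · exact Set.left_mem_Icc.2 hab
        · exact Set.right_mem_Icc.2 hab
    have haT : a ∈ T := by simp [hT]
    have hbT : b ∈ T := by simp [hT]
    have hAcard : A.card = n := by
      rw [hA, Finset.card_image_of_injective _ sinj, Finset.card_range]
    have hcard : n ≤ T.card := hAcard ▸ Finset.card_le_card (Finset.subset_union_left)
    set m := T.card - 1 with hm
    have hm1 : T.card = m + 1 := by omega
    set e := T.orderIsoOfFin hm1 with he
    set t : Fin (m + 1) → ℝ := fun i => (e i : ℝ) with ht
    have hmono : StrictMono t := fun i j hij => by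
      exact_mod_cast e.strictMono hij
    have htmem : ∀ i, t i ∈ T := fun i => (e i).2
    have ht0 : t 0 = a := by
      refine le_antisymm ?_ (hTIcc _ (htmem 0)).1
      have : (⟨a, haT⟩ : T) = e (e.symm ⟨a, haT⟩) := (e.apply_symm_apply _).symm
      calc t 0 ≤ t (e.symm ⟨a, haT⟩) := hmono.monotone (Fin.zero_le _)
        _ = a := by rw [ht]; exact congrArg Subtype.val (e.apply_symm_apply _)
    have htlast : t (Fin.last m) = b := by
      refine le_antisymm (hTIcc _ (htmem _)).2 ?_
      have hb' : t (e.symm ⟨b, hbT⟩) = b := congrArg Subtype.val (e.apply_symm_apply ⟨b, hbT⟩)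
      calc b = t (e.symm ⟨b, hbT⟩) := hb'.symm
        _ ≤ t (Fin.last m) := hmono.monotone (Fin.le_last _)
    have hle : ∑ i : Fin m, (‖x (t i.succ) - x (t i.castSucc)‖₊ : ℝ≥0∞) ^ p
        ≤ pVar p a b x := by
      exact le_iSup_of_le m (le_iSup_of_le t (le_iSup_of_le hmono
        (le_iSup_of_le ht0 (le_iSup_of_le htlast le_rfl))))
    set Good : Finset (Fin m) :=
      Finset.univ.filter (fun i => t i.castSucc ∈ A ∧ t i.succ ∈ A) with hG
    have hgood : ∀ i ∈ Good, c ≤ (‖x (t i.succ) - x (t i.castSucc)‖₊ : ℝ≥0∞) ^ p := by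
      intro i hi
      rw [hG, Finset.mem_filter] at hi
      obtain ⟨jc, _, hjc⟩ := Finset.mem_image.1 hi.2.1
      obtain ⟨js, _, hjs⟩ := Finset.mem_image.1 hi.2.2
      have hne : jc ≠ js := by
        intro hjk
        have : t i.castSucc = t i.succ := by rw [← hjc, ← hjs, hjk]
        exact absurd this (ne_of_lt (hmono Fin.castSucc_lt_succ))
      have hd : ε ≤ ‖x (t i.succ) - x (t i.castSucc)‖ := by
        have := hsep' js jc hne.symm
        rw [← hs2 js, ← hs2 jc, hjs, hjc, dist_eq_norm] at this
        exact this
      have hd' : ε' ≤ ‖x (t i.succ) - x (t i.castSucc)‖₊ := hd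
      exact ENNReal.rpow_le_rpow (by exact_mod_cast hd') hp0
    have hGcard : k ≤ Good.card := by
      have hB : Finset.univ.filter (fun i : Fin m => ¬(t i.castSucc ∈ A ∧ t i.succ ∈ A))
          ⊆ (Finset.univ.filter (fun i : Fin m => t i.castSucc ∉ A)) ∪
            (Finset.univ.filter (fun i : Fin m => t i.succ ∉ A)) := by
        intro i hi
        rw [Finset.mem_filter, not_and_or] at hi
        rcases hi.2 with h | h
        · exact Finset.mem_union_left _ (Finset.mem_filter.2 ⟨Finset.mem_univ _, h⟩)
        · exact Finset.mem_union_right _ (Finset.mem_filter.2 ⟨Finset.mem_univ _, h⟩)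
      have hab2 : ∀ y ∈ T, y ∉ A → y ∈ ({a, b} : Finset ℝ) := by
        intro y hy hyA
        rw [hT, Finset.mem_union] at hy
        tauto
      have hB1 : (Finset.univ.filter (fun i : Fin m => t i.castSucc ∉ A)).card ≤ 2 := by
        have : (Finset.univ.filter (fun i : Fin m => t i.castSucc ∉ A)).card
            ≤ ({a, b} : Finset ℝ).card := by
          apply Finset.card_le_card_of_injOn (fun i => t i.castSucc)
          · intro i hi
            exact hab2 _ (htmem _) (Finset.mem_filter.1 hi).2
          · intro i _ j _ hij
            exact Fin.castSucc_injective m (hmono.injective hij)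
        exact this.trans (Finset.card_insert_le _ _ |>.trans (by simp))
      have hB2 : (Finset.univ.filter (fun i : Fin m => t i.succ ∉ A)).card ≤ 2 := by
        have : (Finset.univ.filter (fun i : Fin m => t i.succ ∉ A)).card
            ≤ ({a, b} : Finset ℝ).card := by
          apply Finset.card_le_card_of_injOn (fun i => t i.succ)
          · intro i hi
            exact hab2 _ (htmem _) (Finset.mem_filter.1 hi).2
          · intro i _ j _ hij
            exact Fin.succ_injective m (hmono.injective hij)
        exact this.trans (Finset.card_insert_le _ _ |>.trans (by simp))
      have hBcard : (Finset.univ.filter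
          (fun i : Fin m => ¬(t i.castSucc ∈ A ∧ t i.succ ∈ A))).card ≤ 4 := by
        calc _ ≤ _ := Finset.card_le_card hB
          _ ≤ _ + _ := Finset.card_union_le _ _
          _ ≤ 4 := by omega
      have hsplit := Finset.card_filter_add_card_filter_not
        (s := (Finset.univ : Finset (Fin m)))
        (p := fun i => t i.castSucc ∈ A ∧ t i.succ ∈ A)
      rw [Finset.card_univ, Fintype.card_fin, ← hG] at hsplit
      have hmk : k + 4 ≤ m := by omega
      omega
    calc (k : ℝ≥0∞) * c ≤ (Good.card : ℝ≥0∞) * c := by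
          apply mul_le_mul_left (by exact_mod_cast hGcard)
      _ = Good.card • c := by rw [nsmul_eq_mul]
      _ ≤ ∑ i ∈ Good, (‖x (t i.succ) - x (t i.castSucc)‖₊ : ℝ≥0∞) ^ p :=
          Finset.card_nsmul_le_sum _ _ _ hgood
      _ ≤ ∑ i : Fin m, (‖x (t i.succ) - x (t i.castSucc)‖₊ : ℝ≥0∞) ^ p :=
          Finset.sum_le_sum_of_subset (Finset.subset_univ _)
      _ ≤ pVar p a b x := hle
  have hdiv : ∀ k : ℕ, (k : ℝ≥0∞) ≤ pVar p a b x / c := fun k =>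
    (ENNReal.le_div_iff_mul_le (Or.inl hc0) (Or.inl hcT)).2 (main k)
  have htop : pVar p a b x / c = ⊤ := by
    refine top_unique ?_
    rw [← ENNReal.iSup_natCast]
    exact iSup_le hdiv
  rcases ENNReal.div_eq_top.1 htop with ⟨_, h⟩ | ⟨h, _⟩
  · exact hc0 h
  · exact hx h
end

section
/- Let E be a normed space, 1 ≤ p ≤ q < ∞, and let f : E → E be Hölder continuous with exponent p/q on precompact subsets of E (i.e., for each precompact K ⊆ E there exists L_K ≥ 0 such that ‖f(u)-f(w)‖ ≤ L_K ‖u-w‖^{p/q} for u,w ∈ K). Then for every x ∈ BV_p([a,b],E), the composition f ∘ x belongs to BV_q([a,b],E), and moreover var_q(f∘x) ≤ L_K^q · var_p(x) where K = x([a,b]). -/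
open scoped ENNReal NNReal

/-- Sufficiency in the Josephy-type theorem: if `f` is Hölder continuous with exponent
`p/q` on the (precompact) range `K = x([a,b])` with constant `L`, then
`var_q (f ∘ x) ≤ L^q · var_p x`; in particular `f ∘ x` has bounded `q`-variation. -/
theorem pVar_comp_of_holder {E : Type*} [NormedAddCommGroup E]
    (p q a b : ℝ) (hp : 1 ≤ p) (hpq : p ≤ q)
    (f : E → E) (x : ℝ → E) (hx : pVar p a b x ≠ ⊤)
    (L : ℝ) (hL : 0 ≤ L)
    (hf : ∀ u ∈ x '' Set.Icc a b, ∀ w ∈ x '' Set.Icc a b,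
      ‖f u - f w‖ ≤ L * ‖u - w‖ ^ (p / q)) :
    pVar q a b (fun t => f (x t)) ≤ ENNReal.ofReal (L ^ q) * pVar p a b x ∧
      pVar q a b (fun t => f (x t)) ≠ ⊤ := by
  have hq0 : (0:ℝ) < q := lt_of_lt_of_le one_pos (hp.trans hpq)
  have key : ∀ u ∈ x '' Set.Icc a b, ∀ w ∈ x '' Set.Icc a b,
      (‖f u - f w‖₊ : ℝ≥0∞) ^ q ≤ ENNReal.ofReal (L ^ q) * (‖u - w‖₊ : ℝ≥0∞) ^ p := by
    intro u hu w hw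
    have hreal : ‖f u - f w‖ ^ q ≤ L ^ q * ‖u - w‖ ^ p := by
      calc ‖f u - f w‖ ^ q ≤ (L * ‖u - w‖ ^ (p / q)) ^ q :=
            Real.rpow_le_rpow (norm_nonneg _) (hf u hu w hw) hq0.le
        _ = L ^ q * (‖u - w‖ ^ (p / q)) ^ q :=
            Real.mul_rpow hL (Real.rpow_nonneg (norm_nonneg _) _)
        _ = L ^ q * ‖u - w‖ ^ p := by
            rw [← Real.rpow_mul (norm_nonneg _), div_mul_cancel₀ p hq0.ne']
    have h1 : (‖f u - f w‖₊ : ℝ≥0∞) ^ q = ENNReal.ofReal (‖f u - f w‖ ^ q) := by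
      rw [← enorm_eq_nnnorm, ← ofReal_norm, ENNReal.ofReal_rpow_of_nonneg (norm_nonneg _) hq0.le]
    have h2 : (‖u - w‖₊ : ℝ≥0∞) ^ p = ENNReal.ofReal (‖u - w‖ ^ p) := by
      rw [← enorm_eq_nnnorm, ← ofReal_norm,
        ENNReal.ofReal_rpow_of_nonneg (norm_nonneg _) (zero_le_one.trans hp)]
    rw [h1, h2, ← ENNReal.ofReal_mul (Real.rpow_nonneg hL q)]
    exact ENNReal.ofReal_le_ofReal hreal
  have main : pVar q a b (fun t => f (x t)) ≤ ENNReal.ofReal (L ^ q) * pVar p a b x := by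
    refine iSup_le fun n => iSup_le fun t => iSup_le fun hmono => iSup_le fun h0 =>
      iSup_le fun hl => ?_
    have hmem : ∀ i : Fin (n+1), x (t i) ∈ x '' Set.Icc a b := fun i =>
      ⟨t i, ⟨h0 ▸ hmono.monotone (Fin.zero_le i), hl ▸ hmono.monotone (Fin.le_last i)⟩, rfl⟩
    calc ∑ i : Fin n, (‖f (x (t i.succ)) - f (x (t i.castSucc))‖₊ : ℝ≥0∞) ^ q
        ≤ ∑ i : Fin n, ENNReal.ofReal (L ^ q) * (‖x (t i.succ) - x (t i.castSucc)‖₊ : ℝ≥0∞) ^ p :=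
          Finset.sum_le_sum fun i _ => key _ (hmem _) _ (hmem _)
      _ = ENNReal.ofReal (L ^ q) * ∑ i : Fin n, (‖x (t i.succ) - x (t i.castSucc)‖₊ : ℝ≥0∞) ^ p :=
          (Finset.mul_sum _ _ _).symm
      _ ≤ ENNReal.ofReal (L ^ q) * pVar p a b x := by
          gcongr
          exact le_iSup_of_le n (le_iSup_of_le t (le_iSup_of_le hmono
            (le_iSup_of_le h0 (le_iSup_of_le hl le_rfl))))
  exact ⟨main, ne_top_of_le_ne_top (ENNReal.mul_ne_top ENNReal.ofReal_ne_top hx) main⟩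
end

section
/- Let E be a normed space and 1 ≤ p ≤ q < ∞. Suppose f : E → E is such that f ∘ x ∈ BV_q([a,b],E) for every x ∈ BV_p([a,b],E). Then f is bounded on every precompact subset of E. -/
open scoped ENNReal NNReal

private lemma chain_bound {E : Type*} [NormedAddCommGroup E] (v : ℕ → E)
    (hv : ∀ k, dist (v (k+1)) (v k) ≤ 4 * (2⁻¹:ℝ)^k) :
    ∀ i j : ℕ, i ≤ j → dist (v j) (v i) ≤ 8 * (2⁻¹:ℝ)^i := by
  intro i j hij
  have h1 : dist (v (i + 0)) (v (i + (j - i))) ≤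
      ∑ k ∈ Finset.range (j-i), dist (v (i+k)) (v (i+k+1)) :=
    dist_le_range_sum_dist (fun k => v (i + k)) (j - i)
  rw [Nat.add_sub_cancel' hij, Nat.add_zero] at h1
  rw [dist_comm]
  refine h1.trans ?_
  have h2 : ∀ k ∈ Finset.range (j-i), dist (v (i+k)) (v (i+k+1)) ≤
      4 * (2⁻¹:ℝ)^i * (2⁻¹:ℝ)^k := by
    intro k _
    rw [dist_comm]
    calc dist (v (i+k+1)) (v (i+k)) ≤ 4 * (2⁻¹:ℝ)^(i+k) := hv _
      _ = 4 * (2⁻¹:ℝ)^i * (2⁻¹:ℝ)^k := by rw [pow_add]; ring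
  refine (Finset.sum_le_sum h2).trans ?_
  rw [← Finset.mul_sum]
  have h3 : ∑ k ∈ Finset.range (j-i), (2⁻¹:ℝ)^k ≤ 2 := by
    refine (Summable.sum_le_tsum (L := SummationFilter.unconditional ℕ) _ (fun k _ => by positivity) ?_).trans ?_
    · exact summable_geometric_of_lt_one (by norm_num) (by norm_num)
    · rw [tsum_geometric_of_lt_one (by norm_num) (by norm_num)]; norm_num
  nlinarith [pow_pos (show (0:ℝ) < 2⁻¹ by norm_num) i]

private lemma nnnorm_rpow_le {E : Type*} [NormedAddCommGroup E] {d : E} {p : ℝ} (hp : 1 ≤ p)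
    (m : ℕ) (h : ‖d‖ ≤ 8 * (2⁻¹:ℝ)^m) :
    (‖d‖₊ : ℝ≥0∞)^p ≤ (8:ℝ≥0∞)^p * (2⁻¹:ℝ≥0∞)^m := by
  have hp0 : (0:ℝ) ≤ p := by linarith
  have h1 : (‖d‖₊ : ℝ≥0∞) ≤ (8:ℝ≥0∞) * (2⁻¹:ℝ≥0∞)^m := by
    rw [← enorm_eq_nnnorm, ← ofReal_norm]
    calc ENNReal.ofReal ‖d‖ ≤ ENNReal.ofReal (8 * (2⁻¹:ℝ)^m) := ENNReal.ofReal_le_ofReal h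
      _ = (8:ℝ≥0∞) * (2⁻¹:ℝ≥0∞)^m := by
          rw [ENNReal.ofReal_mul (by norm_num), ENNReal.ofReal_pow (by norm_num),
            ENNReal.ofReal_inv_of_pos (by norm_num)]
          norm_num
  calc (‖d‖₊ : ℝ≥0∞)^p ≤ ((8:ℝ≥0∞) * (2⁻¹:ℝ≥0∞)^m)^p := ENNReal.rpow_le_rpow h1 hp0
    _ = (8:ℝ≥0∞)^p * ((2⁻¹:ℝ≥0∞)^m : ℝ≥0∞)^p := ENNReal.mul_rpow_of_nonneg _ _ hp0
    _ ≤ (8:ℝ≥0∞)^p * (2⁻¹:ℝ≥0∞)^m := by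
        have heq : (((2⁻¹:ℝ≥0∞)^m : ℝ≥0∞))^p = (2⁻¹:ℝ≥0∞) ^ ((m:ℝ) * p) := by
          rw [← ENNReal.rpow_natCast (2⁻¹:ℝ≥0∞) m, ← ENNReal.rpow_mul]
        rw [heq]
        have h2 : (2⁻¹:ℝ≥0∞) ^ ((m:ℝ)*p) ≤ (2⁻¹:ℝ≥0∞) ^ ((m:ℝ)) :=
          ENNReal.rpow_le_rpow_of_exponent_ge (by simp)
            (le_mul_of_one_le_right (Nat.cast_nonneg m) hp)
        rw [ENNReal.rpow_natCast] at h2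
        exact mul_le_mul_right h2 _

/-- If the composition operator generated by `f` maps `BV_p([a,b],E)` into
`BV_q([a,b],E)`, then `f` is bounded on every precompact (totally bounded) subset of `E`. -/
theorem bounded_on_precompact_of_comp_maps_BV {E : Type*} [NormedAddCommGroup E]
    (p q a b : ℝ) (hp : 1 ≤ p) (hpq : p ≤ q) (hab : a < b)
    (f : E → E)
    (hf : ∀ x : ℝ → E, pVar p a b x ≠ ⊤ → pVar q a b (fun t => f (x t)) ≠ ⊤) :
    ∀ A : Set E, TotallyBounded A → ∃ M : ℝ, ∀ v ∈ A, ‖f v‖ ≤ M := by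
  classical
  intro A hA
  by_contra hUnb
  set g : E → ℝ := fun v => ‖f v‖ with hg
  have hUA : ¬ BddAbove (g '' A) := by
    intro ⟨M, hM⟩
    exact hUnb ⟨M, fun v hv => hM (Set.mem_image_of_mem _ hv)⟩
  have hba : (0:ℝ) < b - a := sub_pos.2 hab
  -- splitting step using total boundedness
  have step0 : ∀ (S : Set E), S ⊆ A → ¬ BddAbove (g '' S) → ∀ ε : ℝ, 0 < ε →
      ∃ c, ¬ BddAbove (g '' (S ∩ Metric.ball c ε)) ∧ (S ∩ Metric.ball c ε).Nonempty := by
    intro S hSA hS ε hε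
    obtain ⟨t, ht, hcov⟩ := (Metric.totallyBounded_iff).1 hA ε hε
    by_contra hcon
    push_neg at hcon
    apply hS
    have hS' : S = ⋃ y ∈ t, (S ∩ Metric.ball y ε) := by
      apply Set.Subset.antisymm
      · intro v hv
        obtain ⟨y, hy, hvy⟩ := Set.mem_iUnion₂.1 (hcov (hSA hv))
        exact Set.mem_iUnion₂.2 ⟨y, hy, hv, hvy⟩
      · intro v hv
        obtain ⟨y, hy, hv1, -⟩ := Set.mem_iUnion₂.1 hv
        exact hv1
    rw [hS', Set.image_iUnion₂, Set.Finite.bddAbove_biUnion ht]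
    intro y _
    by_cases hB : BddAbove (g '' (S ∩ Metric.ball y ε))
    · exact hB
    · have h := hcon y hB
      rw [h, Set.image_empty]
      exact bddAbove_empty
  -- the recursive step
  have step : ∀ (k : ℕ) (w u : E), ¬ BddAbove (g '' (A ∩ Metric.ball w ((2⁻¹:ℝ)^k))) →
      ∃ w' u', (¬ BddAbove (g '' (A ∩ Metric.ball w' ((2⁻¹:ℝ)^(k+1))))) ∧
        u' ∈ A ∩ Metric.ball w' ((2⁻¹:ℝ)^(k+1)) ∧ dist w' w ≤ 2 * (2⁻¹:ℝ)^k ∧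
        ‖f u‖ + 1 < ‖f u'‖ := by
    intro k w u hw
    obtain ⟨c, hc, hne⟩ := step0 (A ∩ Metric.ball w ((2⁻¹:ℝ)^k)) Set.inter_subset_left hw
      ((2⁻¹:ℝ)^(k+1)) (by positivity)
    have hsub : (A ∩ Metric.ball w ((2⁻¹:ℝ)^k)) ∩ Metric.ball c ((2⁻¹:ℝ)^(k+1)) ⊆
        A ∩ Metric.ball c ((2⁻¹:ℝ)^(k+1)) := fun z hz => ⟨hz.1.1, hz.2⟩
    have hc' : ¬ BddAbove (g '' (A ∩ Metric.ball c ((2⁻¹:ℝ)^(k+1)))) :=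
      fun h => hc (h.mono (Set.image_mono (f := g) hsub))
    obtain ⟨y, hy, hylt⟩ := not_bddAbove_iff.1 hc' (‖f u‖ + 1)
    obtain ⟨u', hu', rfl⟩ := hy
    obtain ⟨z, hz⟩ := hne
    refine ⟨c, u', hc', hu', ?_, hylt⟩
    have d1 : dist z w < (2⁻¹:ℝ)^k := hz.1.2
    have d2 : dist z c < (2⁻¹:ℝ)^(k+1) := hz.2
    have hle : (2⁻¹:ℝ)^(k+1) ≤ (2⁻¹:ℝ)^k :=
      pow_le_pow_of_le_one (by norm_num) (by norm_num) (Nat.le_succ k)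
    calc dist c w ≤ dist c z + dist z w := dist_triangle _ _ _
      _ ≤ 2 * (2⁻¹:ℝ)^k := by rw [dist_comm c z]; linarith
  -- base point
  obtain ⟨c0, hc0, hne0⟩ := step0 A (subset_refl A) hUA ((2⁻¹:ℝ)^0) (by norm_num)
  obtain ⟨u0, hu0⟩ := hne0
  choose W' U' hst1 hst2 hst3 hst4 using step
  let motive : ℕ → Type _ := fun k => {pr : E × E //
    (¬ BddAbove (g '' (A ∩ Metric.ball pr.1 ((2⁻¹:ℝ)^k)))) ∧
    pr.2 ∈ A ∩ Metric.ball pr.1 ((2⁻¹:ℝ)^k)}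
  let G : ∀ k, motive k := fun k => Nat.rec (⟨(c0, u0), hc0, hu0⟩ : motive 0)
    (fun k pr => ⟨(W' k pr.1.1 pr.1.2 pr.2.1, U' k pr.1.1 pr.1.2 pr.2.1),
       hst1 k pr.1.1 pr.1.2 pr.2.1, hst2 k pr.1.1 pr.1.2 pr.2.1⟩) k
  set v : ℕ → E := fun k => (G k).1.2 with hvdef
  set w : ℕ → E := fun k => (G k).1.1 with hwdef
  have hGsucc : ∀ k, (G (k+1)).1 =
      (W' k (w k) (v k) (G k).2.1, U' k (w k) (v k) (G k).2.1) := fun k => rfl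
  have hf1 : ∀ k, ‖f (v k)‖ + 1 < ‖f (v (k+1))‖ := by
    intro k
    have h4 := hst4 k (w k) (v k) (G k).2.1
    have he : v (k+1) = U' k (w k) (v k) (G k).2.1 := congrArg Prod.snd (hGsucc k)
    rw [he]; exact h4
  have hvA : ∀ k, v k ∈ A := fun k => (G k).2.2.1
  have hwv : ∀ k, dist (v k) (w k) < (2⁻¹:ℝ)^k := fun k => Metric.mem_ball.1 (G k).2.2.2
  have hww : ∀ k, dist (w (k+1)) (w k) ≤ 2 * (2⁻¹:ℝ)^k := by
    intro k
    have h3 := hst3 k (w k) (v k) (G k).2.1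
    have he : w (k+1) = W' k (w k) (v k) (G k).2.1 := congrArg Prod.fst (hGsucc k)
    rw [he]; exact h3
  have hvv : ∀ k, dist (v (k+1)) (v k) ≤ 4 * (2⁻¹:ℝ)^k := by
    intro k
    have h1 := hwv (k+1)
    have h2 := hww k
    have h3 := hwv k
    have hle : (2⁻¹:ℝ)^(k+1) ≤ (2⁻¹:ℝ)^k :=
      pow_le_pow_of_le_one (by norm_num) (by norm_num) (Nat.le_succ k)
    calc dist (v (k+1)) (v k)
        ≤ dist (v (k+1)) (w (k+1)) + dist (w (k+1)) (w k) + dist (w k) (v k) :=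
          dist_triangle4 _ _ _ _
      _ ≤ 4 * (2⁻¹:ℝ)^k := by rw [dist_comm (w k) (v k)]; linarith
  have hchain : ∀ i j : ℕ, i ≤ j → ‖v j - v i‖ ≤ 8 * (2⁻¹:ℝ)^i := by
    intro i j hij
    have := chain_bound v hvv i j hij
    rwa [dist_eq_norm] at this
  have hpowle1 : ∀ i : ℕ, (2⁻¹:ℝ)^i ≤ 1 :=
    fun i => pow_le_one₀ (by norm_num) (by norm_num)
  have htotal : ∀ i j : ℕ, ‖v j - v i‖ ≤ 8 := by
    intro i j
    rcases le_total i j with h | h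
    · exact (hchain i j h).trans (by nlinarith [hpowle1 i])
    · rw [norm_sub_rev]
      exact (hchain j i h).trans (by nlinarith [hpowle1 j])
  -- the BV_p path
  set Nt : ℝ → ℕ := fun s => ⌊Real.logb 2 ((b - a) / (b - s))⌋₊ with hNtdef
  set x : ℝ → E := fun s => v (Nt s) with hxdef
  have hNmono : ∀ s u : ℝ, a ≤ s → s ≤ u → u < b → Nt s ≤ Nt u := by
    intro s u has hsu hub
    have h1 : (0:ℝ) < b - u := sub_pos.2 hub
    have h2 : (0:ℝ) < b - s := by linarith
    have h3 : (0:ℝ) < (b-a)/(b-s) := div_pos hba h2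
    apply Nat.floor_mono
    apply Real.logb_le_logb_of_le (by norm_num : (1:ℝ) < 2) h3
    gcongr
  have hNpoint : ∀ k : ℕ, Nt (b - (b-a) * (2⁻¹:ℝ)^k) = k := by
    intro k
    have key : (b - a) / (b - (b - (b-a) * (2⁻¹:ℝ)^k)) = (2:ℝ)^k := by
      rw [sub_sub_cancel, div_eq_iff (by positivity)]
      rw [mul_comm ((2:ℝ)^k), mul_assoc, ← mul_pow]
      norm_num
    show ⌊Real.logb 2 ((b - a) / (b - (b - (b-a) * (2⁻¹:ℝ)^k)))⌋₊ = k
    rw [key, ← Real.rpow_natCast 2 k,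
      Real.logb_rpow (by norm_num) (by norm_num), Nat.floor_natCast]
  have hNb : Nt b = 0 := by
    show ⌊Real.logb 2 ((b - a) / (b - b))⌋₊ = 0
    rw [sub_self, div_zero, Real.logb_zero, Nat.floor_zero]
  -- upper bound for p-variation of x
  have h8top : (8:ℝ≥0∞)^p ≠ ⊤ :=
    ENNReal.rpow_ne_top_of_nonneg (by linarith) (by norm_num)
  have hCp : pVar p a b x ≤ (8:ℝ≥0∞)^p + (8:ℝ≥0∞)^p * 2 := by
    refine iSup_le fun n => iSup_le fun t => iSup_le fun hstm => iSup_le fun ht0 =>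
      iSup_le fun htl => ?_
    set m : Fin (n+1) → ℕ := fun j => Nt (t j) with hm
    set T : Fin n → ℝ≥0∞ := fun i => (‖x (t i.succ) - x (t i.castSucc)‖₊ : ℝ≥0∞) ^ p with hT
    have hta : ∀ j : Fin (n+1), a ≤ t j := by
      intro j; rw [← ht0]; exact hstm.monotone (Fin.zero_le j)
    have htb : ∀ j : Fin (n+1), j ≠ Fin.last n → t j < b := by
      intro j hj; rw [← htl]; exact hstm (lt_of_le_of_ne (Fin.le_last j) hj)
    have hxval : ∀ j : Fin (n+1), x (t j) = v (m j) := fun j => rfl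
    have hTle : ∀ i : Fin n, T i ≤ (8:ℝ≥0∞)^p := by
      intro i
      have := nnnorm_rpow_le (d := x (t i.succ) - x (t i.castSucc)) hp 0
        (by rw [hxval, hxval]; simpa using htotal (m i.castSucc) (m i.succ))
      simpa using this
    have hsplit := Finset.sum_filter_add_sum_filter_not Finset.univ
      (fun i : Fin n => i.succ = Fin.last n) T
    have part1 : ∑ i ∈ Finset.univ.filter (fun i : Fin n => i.succ = Fin.last n), T i
        ≤ (8:ℝ≥0∞)^p := by
      have hcard : (Finset.univ.filter (fun i : Fin n => i.succ = Fin.last n)).card ≤ 1 :=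
        Finset.card_le_one.2 (fun i hi j hj => Fin.succ_injective n
          ((Finset.mem_filter.1 hi).2.trans ((Finset.mem_filter.1 hj).2).symm))
      calc ∑ i ∈ Finset.univ.filter (fun i : Fin n => i.succ = Fin.last n), T i
          ≤ ∑ _i ∈ Finset.univ.filter (fun i : Fin n => i.succ = Fin.last n), (8:ℝ≥0∞)^p :=
            Finset.sum_le_sum (fun i _ => hTle i)
        _ = (Finset.univ.filter (fun i : Fin n => i.succ = Fin.last n)).card • (8:ℝ≥0∞)^p :=
            Finset.sum_const _
        _ ≤ (8:ℝ≥0∞)^p := by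
            rw [nsmul_eq_mul]
            calc ((Finset.univ.filter (fun i : Fin n => i.succ = Fin.last n)).card : ℝ≥0∞)
                  * (8:ℝ≥0∞)^p ≤ 1 * (8:ℝ≥0∞)^p := by
                  gcongr
                  exact_mod_cast hcard
              _ = (8:ℝ≥0∞)^p := one_mul _
    have part2 : ∑ i ∈ Finset.univ.filter (fun i : Fin n => ¬ i.succ = Fin.last n), T i
        ≤ (8:ℝ≥0∞)^p * 2 := by
      set s2 := Finset.univ.filter (fun i : Fin n => ¬ i.succ = Fin.last n) with hs2
      set s3 := s2.filter (fun i => m i.castSucc < m i.succ) with hs3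
      have hmle : ∀ i : Fin n, i.succ ≠ Fin.last n → m i.castSucc ≤ m i.succ := by
        intro i hi
        exact hNmono _ _ (hta _) (hstm.monotone (Fin.castSucc_le_succ i)) (htb _ hi)
      have hzero : ∀ i ∈ s2, i ∉ s3 → T i = 0 := by
        intro i hi hi3
        have hi2 : i.succ ≠ Fin.last n := (Finset.mem_filter.1 hi).2
        have hnlt : ¬ m i.castSucc < m i.succ := fun hlt =>
          hi3 (Finset.mem_filter.2 ⟨hi, hlt⟩)
        have heq : m i.castSucc = m i.succ := le_antisymm (hmle i hi2) (not_lt.1 hnlt)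
        show (‖x (t i.succ) - x (t i.castSucc)‖₊ : ℝ≥0∞) ^ p = 0
        rw [hxval, hxval, ← heq, sub_self, nnnorm_zero]
        exact ENNReal.zero_rpow_of_pos (by linarith)
      have hsum23 : ∑ i ∈ s2, T i = ∑ i ∈ s3, T i :=
        (Finset.sum_subset (Finset.filter_subset _ s2) hzero).symm
      have hterm : ∀ i ∈ s3, T i ≤ (8:ℝ≥0∞)^p * (2⁻¹:ℝ≥0∞) ^ (m i.castSucc) := by
        intro i hi
        apply nnnorm_rpow_le hp
        rw [hxval, hxval]
        exact hchain (m i.castSucc) (m i.succ) (le_of_lt (Finset.mem_filter.1 hi).2)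
      have hinj : ∀ i₁ ∈ s3, ∀ i₂ ∈ s3,
          m i₁.castSucc = m i₂.castSucc → i₁ = i₂ := by
        have haux : ∀ i₁ i₂ : Fin n, i₁ ∈ s3 → i₂ ∈ s3 → i₁ < i₂ →
            m i₁.castSucc < m i₂.castSucc := by
          intro i₁ i₂ hi1 hi2 hlt
          have h1 : m i₁.castSucc < m i₁.succ := (Finset.mem_filter.1 hi1).2
          have hsle : (i₁.succ : Fin (n+1)) ≤ i₂.castSucc := by
            rw [Fin.le_def]
            simpa using Nat.succ_le_of_lt hlt
          have hi2ne : (i₂.castSucc : Fin (n+1)) ≠ Fin.last n := (Fin.castSucc_lt_last i₂).ne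
          have h2 : m i₁.succ ≤ m i₂.castSucc :=
            hNmono _ _ (hta _) (hstm.monotone hsle) (htb _ hi2ne)
          exact lt_of_lt_of_le h1 h2
        intro i₁ hi1 i₂ hi2 heq
        by_contra hne
        rcases lt_or_gt_of_ne hne with h | h
        · exact absurd heq (ne_of_lt (haux i₁ i₂ hi1 hi2 h))
        · exact absurd heq.symm (ne_of_lt (haux i₂ i₁ hi2 hi1 h))
      calc ∑ i ∈ s2, T i = ∑ i ∈ s3, T i := hsum23
        _ ≤ ∑ i ∈ s3, (8:ℝ≥0∞)^p * (2⁻¹:ℝ≥0∞) ^ (m i.castSucc) := Finset.sum_le_sum hterm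
        _ = ∑ k ∈ s3.image (fun i => m i.castSucc), (8:ℝ≥0∞)^p * (2⁻¹:ℝ≥0∞) ^ k :=
            (Finset.sum_image (f := fun k => (8:ℝ≥0∞)^p * (2⁻¹:ℝ≥0∞)^k) hinj).symm
        _ ≤ ∑' k : ℕ, (8:ℝ≥0∞)^p * (2⁻¹:ℝ≥0∞) ^ k := ENNReal.sum_le_tsum _
        _ = (8:ℝ≥0∞)^p * 2 := by
            rw [ENNReal.tsum_mul_left, ENNReal.tsum_geometric]
            congr 1
            have h12 : (1:ℝ≥0∞) - 2⁻¹ = 2⁻¹ := by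
              rw [← ENNReal.inv_two_add_inv_two, ENNReal.add_sub_cancel_right
                (by norm_num : (2:ℝ≥0∞)⁻¹ ≠ ⊤)]
            rw [h12, inv_inv]
    calc (∑ i : Fin n, (‖x (t i.succ) - x (t i.castSucc)‖₊ : ℝ≥0∞) ^ p) = ∑ i : Fin n, T i := rfl
      _ = _ + _ := hsplit.symm
      _ ≤ (8:ℝ≥0∞)^p + (8:ℝ≥0∞)^p * 2 := add_le_add part1 part2
  have hxfin : pVar p a b x ≠ ⊤ :=
    ne_top_of_le_ne_top (ENNReal.add_ne_top.2 ⟨h8top, ENNReal.mul_ne_top h8top (by norm_num)⟩) hCp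
  -- lower bound for q-variation of f ∘ x
  have hlow : ∀ N : ℕ, (N : ℝ≥0∞) ≤ pVar q a b (fun s => f (x s)) := by
    intro N
    set tt : Fin (N+2) → ℝ := fun i => if (i:ℕ) = N+1 then b else b - (b-a) * (2⁻¹:ℝ)^(i:ℕ)
      with htt
    have httlt : ∀ i : Fin (N+2), (i:ℕ) ≠ N+1 → tt i < b := by
      intro i hi
      simp only [htt, if_neg hi]
      have hpos : (0:ℝ) < (b-a) * (2⁻¹:ℝ)^(i:ℕ) := by positivity
      linarith
    have hmono : StrictMono tt := by
      intro i j hij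
      have hij' : (i:ℕ) < (j:ℕ) := hij
      have hi : (i:ℕ) ≠ N+1 := by have := j.isLt; omega
      by_cases hj : (j:ℕ) = N+1
      · rw [show tt j = b by simp [htt, hj]]
        exact httlt i hi
      · simp only [htt, if_neg hi, if_neg hj]
        have hlt : (2⁻¹:ℝ)^(j:ℕ) < (2⁻¹:ℝ)^(i:ℕ) :=
          pow_lt_pow_right_of_lt_one₀ (by norm_num) (by norm_num) hij'
        have := mul_lt_mul_of_pos_left hlt hba
        linarith
    have htt0 : tt 0 = a := by
      simp only [htt]
      norm_num
    have httl : tt (Fin.last (N+1)) = b := by simp [htt]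
    have hval : ∀ i : Fin (N+2), (i:ℕ) ≠ N+1 → x (tt i) = v (i:ℕ) := by
      intro i hi
      simp only [htt, if_neg hi]
      show v (Nt (b - (b-a) * (2⁻¹:ℝ)^(i:ℕ))) = v (i:ℕ)
      rw [hNpoint]
    have hterm : ∀ i : Fin (N+1), (i:ℕ) ≠ N →
        (1:ℝ≥0∞) ≤ (‖f (x (tt i.succ)) - f (x (tt i.castSucc))‖₊ : ℝ≥0∞) ^ q := by
      intro i hi
      have h1 : x (tt i.succ) = v ((i:ℕ)+1) := by
        rw [hval i.succ (by simp [Fin.val_succ]; omega)]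
        simp [Fin.val_succ]
      have h2 : x (tt i.castSucc) = v (i:ℕ) := by
        rw [hval i.castSucc (by simp [Fin.coe_castSucc]; omega)]
        simp
      rw [h1, h2]
      have h3 := norm_sub_norm_le (f (v ((i:ℕ)+1))) (f (v (i:ℕ)))
      have hge : (1:ℝ) ≤ ‖f (v ((i:ℕ)+1)) - f (v (i:ℕ))‖ := by
        have := hf1 (i:ℕ)
        linarith
      have h1le : (1:ℝ≥0∞) ≤ (‖f (v ((i:ℕ)+1)) - f (v (i:ℕ))‖₊ : ℝ≥0∞) := by
        rw [← enorm_eq_nnnorm, ← ofReal_norm]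
        rw [ENNReal.one_le_ofReal]
        exact hge
      calc (1:ℝ≥0∞) = 1 ^ q := (ENNReal.one_rpow q).symm
        _ ≤ _ := ENNReal.rpow_le_rpow h1le (by linarith)
    have hcard : (Finset.univ.filter (fun i : Fin (N+1) => ¬ (i:ℕ) = N)).card = N := by
      have hpred : ∀ i : Fin (N+1), (¬ (i:ℕ) = N) ↔ i ≠ Fin.last N := by
        intro i
        constructor
        · intro h h'; exact h (by rw [h']; simp)
        · intro h h'; exact h (Fin.ext (by simpa using h'))
      rw [Finset.filter_congr (fun i _ => by rw [hpred i])]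
      rw [Finset.filter_ne' Finset.univ (Fin.last N)]
      rw [Finset.card_erase_of_mem (Finset.mem_univ _), Finset.card_univ, Fintype.card_fin]
      simp
    have hsumge : (N : ℝ≥0∞) ≤
        ∑ i : Fin (N+1), (‖f (x (tt i.succ)) - f (x (tt i.castSucc))‖₊ : ℝ≥0∞) ^ q := by
      calc (N : ℝ≥0∞)
          = ∑ _i ∈ Finset.univ.filter (fun i : Fin (N+1) => ¬ (i:ℕ) = N), (1:ℝ≥0∞) := by
            rw [Finset.sum_const, hcard, nsmul_eq_mul, mul_one]
        _ ≤ ∑ i ∈ Finset.univ.filter (fun i : Fin (N+1) => ¬ (i:ℕ) = N),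
              (‖f (x (tt i.succ)) - f (x (tt i.castSucc))‖₊ : ℝ≥0∞) ^ q :=
            Finset.sum_le_sum (fun i hi => hterm i (Finset.mem_filter.1 hi).2)
        _ ≤ _ := Finset.sum_le_sum_of_subset (Finset.filter_subset _ _)
    refine hsumge.trans ?_
    show (∑ i : Fin (N+1), (‖f (x (tt i.succ)) - f (x (tt i.castSucc))‖₊ : ℝ≥0∞) ^ q)
      ≤ pVar q a b (fun s => f (x s))
    rw [pVar]
    exact le_iSup_of_le (N+1) (le_iSup_of_le tt (le_iSup_of_le hmono
      (le_iSup_of_le htt0 (le_iSup_of_le httl le_rfl))))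
  have htop : pVar q a b (fun s => f (x s)) = ⊤ := by
    by_contra hne
    obtain ⟨N, hN⟩ := ENNReal.exists_nat_gt hne
    exact absurd (hlow N) (not_le.2 hN)
  exact hf x hxfin htop
end

section
/- The map x : [0,1] → c₀₀(ℝ) (finitely supported real sequences with sup norm) given by x(t) = (1, 1/2², ..., 1/k², 0, 0, ...) for t ∈ [1 - 1/k, 1 - 1/(k+1)) and x(1) = 0 has bounded 1-variation, but its range is not relatively compact in c₀₀(ℝ). -/
open scoped ENNReal NNReal

/-- `c₀₀(ℝ)`: the space of finitely supported real sequences, as a subspace of `ℓ∞`,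
so that it carries the supremum norm. -/
noncomputable def c00 : Submodule ℝ (lp (fun _ : ℕ => ℝ) ⊤) where
  carrier := {f | (Function.support (⇑f)).Finite}
  add_mem' := by
    intro f g hf hg
    refine (hf.union hg).subset ?_
    intro i hi
    simp only [Function.mem_support, lp.coeFn_add, Pi.add_apply] at hi
    by_contra h
    simp only [Set.mem_union, Function.mem_support, not_or, not_not] at h
    exact hi (by rw [h.1, h.2]; ring)
  zero_mem' := by simp [Function.support]
  smul_mem' := by
    intro c f hf
    refine hf.subset ?_
    intro i hi
    simp only [Function.mem_support, lp.coeFn_smul, Pi.smul_apply, smul_eq_mul] at hi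
    simp only [Function.mem_support]
    intro h
    exact hi (by rw [h, mul_zero])

/-- The finitely supported sequence `(1, 1/2², …, 1/k², 0, 0, …)` as an element of `c₀₀(ℝ)`. -/
noncomputable def c00elem (k : ℕ) : c00 :=
  ⟨⟨fun i => if i < k then 1 / ((i : ℝ) + 1) ^ 2 else 0, by
      apply memℓp_infty
      refine ⟨1, ?_⟩
      rintro y ⟨i, rfl⟩
      dsimp
      split_ifs with h
      · rw [abs_of_nonneg (by positivity)]
        rw [div_le_one (by positivity)]
        nlinarith [Nat.cast_nonneg (α := ℝ) i]
      · simp⟩, by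
    refine Set.Finite.subset (Finset.range k).finite_toSet ?_
    intro i hi
    simp only [Function.mem_support] at hi
    simp only [Finset.coe_range, Set.mem_Iio]
    by_contra h
    push_neg at h
    exact hi (by simp [Nat.not_lt.mpr h, if_neg])⟩

/-- The step map `x : [0,1] → c₀₀(ℝ)` equal to `(1, 1/2², …, 1/k², 0, …)` on
`[1 - 1/k, 1 - 1/(k+1))` for `k ∈ ℕ`, and `x 1 = 0`. -/
noncomputable def c00map (t : ℝ) : c00 :=
  if t < 1 then c00elem ⌊1 / (1 - t)⌋₊ else 0

namespace C00Aux

noncomputable def T (k : ℕ) : ℝ := ∑ j ∈ Finset.range k, 1 / ((j : ℝ) + 1) ^ 2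

lemma T_mono : Monotone T := by
  intro a b hab
  exact Finset.sum_le_sum_of_subset_of_nonneg (Finset.range_subset_range.2 hab)
    (fun j _ _ => by positivity)

lemma T_le_two (k : ℕ) : T k ≤ 2 := by
  have h : ∀ n : ℕ, T (n + 1) ≤ 2 - 1 / ((n : ℝ) + 1) := by
    intro n
    induction n with
    | zero => simp [T]; norm_num
    | succ m ih =>
        have hstep : T (m + 2) = T (m + 1) + 1 / ((m : ℝ) + 2) ^ 2 := by
          simp [T, Finset.sum_range_succ]
          ring_nf
        have h1 : 1 / ((m : ℝ) + 2) ^ 2 ≤ 1 / (((m : ℝ) + 1) * ((m : ℝ) + 2)) := by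
          apply one_div_le_one_div_of_le (by positivity)
          nlinarith [Nat.cast_nonneg (α := ℝ) m]
        have h2 : 1 / (((m : ℝ) + 1) * ((m : ℝ) + 2))
            = 1 / ((m : ℝ) + 1) - 1 / ((m : ℝ) + 2) := by
          field_simp
          ring
        have : ((m + 1 : ℕ) : ℝ) + 1 = (m : ℝ) + 2 := by push_cast; ring
        rw [this]
        linarith
  cases k with
  | zero => simp [T]
  | succ n =>
      have := h n
      have : (0:ℝ) < 1 / ((n : ℝ) + 1) := by positivity
      linarith [h n]

lemma c00_coe_norm (x : c00) : ‖x‖ = ‖(x : lp (fun _ : ℕ => ℝ) ⊤)‖ := rfl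

lemma c00elem_sub_apply (k m i : ℕ) :
    ((c00elem m - c00elem k : c00) : lp (fun _ : ℕ => ℝ) ⊤) i
      = (if i < m then 1/((i:ℝ)+1)^2 else 0) - (if i < k then 1/((i:ℝ)+1)^2 else 0) := rfl

lemma norm_c00elem_sub_le {k m : ℕ} (hkm : k ≤ m) :
    ‖c00elem m - c00elem k‖ ≤ T m - T k := by
  rw [c00_coe_norm]
  refine lp.norm_le_of_forall_le (sub_nonneg.2 (T_mono hkm)) fun i => ?_
  rw [c00elem_sub_apply, Real.norm_eq_abs]
  have hTmk : T m - T k = ∑ j ∈ Finset.Ico k m, 1 / ((j : ℝ) + 1) ^ 2 := by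
    rw [Finset.sum_Ico_eq_sub _ hkm]; rfl
  by_cases him : i < m
  · by_cases hik : i < k
    · simp only [him, hik, if_pos]
      rw [sub_self, abs_zero]
      exact sub_nonneg.2 (T_mono hkm)
    · simp only [him, hik, if_pos, if_neg, if_true, if_false]
      rw [sub_zero, abs_of_nonneg (by positivity)]
      rw [hTmk]
      exact Finset.single_le_sum (f := fun j : ℕ => 1 / ((j : ℝ) + 1) ^ 2)
        (fun j _ => by positivity) (Finset.mem_Ico.2 ⟨Nat.le_of_not_lt hik, him⟩)
  · have hik : ¬ i < k := fun h => him (h.trans_le hkm)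
    simp only [him, hik, if_neg, if_false]
    rw [sub_self, abs_zero]
    exact sub_nonneg.2 (T_mono hkm)

lemma norm_c00elem_le_one (k : ℕ) : ‖c00elem k‖ ≤ 1 := by
  rw [c00_coe_norm]
  refine lp.norm_le_of_forall_le one_pos.le fun i => ?_
  show ‖if i < k then 1 / ((i : ℝ) + 1) ^ 2 else 0‖ ≤ 1
  rw [Real.norm_eq_abs]
  split_ifs with h
  · rw [abs_of_nonneg (by positivity), div_le_one (by positivity)]
    nlinarith [Nat.cast_nonneg (α := ℝ) i]
  · simp

lemma T_nonneg (k : ℕ) : 0 ≤ T k :=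
  Finset.sum_nonneg fun j _ => by positivity

noncomputable def Fb (t : ℝ) : ℝ := if t < 1 then T ⌊1 / (1 - t)⌋₊ else 3

lemma Fb_nonneg (t : ℝ) : 0 ≤ Fb t := by
  rw [Fb]; split_ifs
  · exact T_nonneg _
  · norm_num

lemma step {s t : ℝ} (hst : s < t) (ht : t ≤ 1) :
    ‖c00map t - c00map s‖ ≤ Fb t - Fb s := by
  have hs1 : s < 1 := lt_of_lt_of_le hst ht
  rw [c00map, c00map, Fb, Fb, if_pos hs1, if_pos hs1]
  by_cases ht1 : t < 1
  · rw [if_pos ht1, if_pos ht1]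
    refine norm_c00elem_sub_le (Nat.floor_mono ?_)
    apply one_div_le_one_div_of_le (by linarith)
    linarith
  · rw [if_neg ht1, if_neg ht1, zero_sub, norm_neg]
    linarith [norm_c00elem_le_one ⌊1 / (1 - s)⌋₊, T_le_two ⌊1 / (1 - s)⌋₊]

end C00Aux

set_option synthInstance.maxHeartbeats 1000000 in
set_option maxHeartbeats 1000000 in
/-- The map `c00map` has bounded `1`-variation on `[0,1]`, but its range is not
relatively compact in `c₀₀(ℝ)`. -/

theorem c00map_bv_not_relatively_compact :
    pVar 1 0 1 c00map ≠ ⊤ ∧ ¬ IsCompact (closure (c00map '' Set.Icc 0 1)) := by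
  constructor
  · have h1 : pVar 1 0 1 c00map ≤ 3 := by
      rw [pVar]
      refine iSup_le fun n => iSup_le fun t => iSup_le fun hmono => iSup_le fun h0 =>
        iSup_le fun hl => ?_
      have hle : ∀ i : Fin (n+1), t i ≤ 1 := fun i => hl ▸ hmono.monotone (Fin.le_last i)
      set f : ℕ → ℝ := fun j => C00Aux.Fb (t ⟨min j n, Nat.lt_succ_of_le (min_le_right _ _)⟩)
        with hf
      have hterm : ∀ i : Fin n,
          ‖c00map (t i.succ) - c00map (t i.castSucc)‖ ≤ f ((i : ℕ) + 1) - f (i : ℕ) := by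
        intro i
        have e1 : f ((i : ℕ) + 1) = C00Aux.Fb (t i.succ) := by
          simp only [hf]
          congr 2
          exact Fin.ext (by simp [Nat.min_eq_left (Nat.succ_le_of_lt i.isLt)])
        have e2 : f (i : ℕ) = C00Aux.Fb (t i.castSucc) := by
          simp only [hf]
          congr 2
          exact Fin.ext (by simp [Nat.min_eq_left (le_of_lt i.isLt)])
        rw [e1, e2]
        exact C00Aux.step (hmono Fin.castSucc_lt_succ) (hle _)
      have key : ∑ i : Fin n, ‖c00map (t i.succ) - c00map (t i.castSucc)‖ ≤ 3 := by
        have hfn : f n = 3 := by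
          simp only [hf, Nat.min_self]
          have hnl : (⟨n, Nat.lt_succ_self n⟩ : Fin (n+1)) = Fin.last n := rfl
          rw [hnl, hl, C00Aux.Fb, if_neg (lt_irrefl 1)]
        have hf0 : 0 ≤ f 0 := C00Aux.Fb_nonneg _
        calc ∑ i : Fin n, ‖c00map (t i.succ) - c00map (t i.castSucc)‖
            ≤ ∑ i : Fin n, (f ((i : ℕ) + 1) - f (i : ℕ)) :=
              Finset.sum_le_sum fun i _ => hterm i
          _ = ∑ j ∈ Finset.range n, (f (j + 1) - f j) :=
              Fin.sum_univ_eq_sum_range (fun j => f (j + 1) - f j) n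
          _ = f n - f 0 := Finset.sum_range_sub f n
          _ ≤ 3 := by rw [hfn]; linarith
      calc ∑ i : Fin n, (‖c00map (t i.succ) - c00map (t i.castSucc)‖₊ : ℝ≥0∞) ^ (1 : ℝ)
          = ∑ i : Fin n, (‖c00map (t i.succ) - c00map (t i.castSucc)‖₊ : ℝ≥0∞) := by
            simp [ENNReal.rpow_one]
        _ = ((∑ i : Fin n, ‖c00map (t i.succ) - c00map (t i.castSucc)‖₊ : ℝ≥0) : ℝ≥0∞) := by
            rw [ENNReal.coe_finset_sum]
        _ ≤ ((3 : ℝ≥0) : ℝ≥0∞) := by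
            rw [ENNReal.coe_le_coe, ← NNReal.coe_le_coe]
            push_cast
            exact key
        _ = (3 : ℝ≥0∞) := by norm_num
    exact ne_top_of_le_ne_top (by simp) h1
  · intro hK
    have hmem : ∀ n : ℕ, c00elem (n+1) ∈ c00map '' Set.Icc 0 1 := by
      intro n
      have hn : (0:ℝ) < (n:ℝ) + 1 := by positivity
      have hpos : 0 < 1/((n:ℝ)+1) := by positivity
      have hle1 : 1/((n:ℝ)+1) ≤ 1 := by
        rw [div_le_one hn]; linarith [Nat.cast_nonneg (α := ℝ) n]
      refine ⟨1 - 1/((n:ℝ)+1), ⟨by linarith, by linarith⟩, ?_⟩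
      rw [c00map, if_pos (by linarith)]
      congr 1
      have h1 : 1 - (1 - 1/((n:ℝ)+1)) = 1/((n:ℝ)+1) := by ring
      rw [h1, one_div_one_div,
        show ((n:ℝ)+1) = ((n+1 : ℕ):ℝ) by push_cast; ring, Nat.floor_natCast]
    obtain ⟨a, -, φ, hφ, hconv⟩ := hK.tendsto_subseq
      (x := fun n => c00elem (n+1)) (fun n => subset_closure (hmem n))
    obtain ⟨N, hN⟩ := a.2.bddAbove
    have haN : (↑a : lp (fun _ : ℕ => ℝ) ⊤) (N+1) = 0 := by
      by_contra h
      exact absurd (hN (Function.mem_support.2 h)) (by omega)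
    have hlow : ∀ j : ℕ, N + 1 ≤ j →
        1/((N:ℝ)+2)^2 ≤ dist ((fun n => c00elem (n+1)) (φ j)) a := by
      intro j hj
      rw [dist_eq_norm, C00Aux.c00_coe_norm]
      have hidx : N + 1 < φ j + 1 := Nat.lt_succ_of_le (hj.trans hφ.le_apply)
      have hcoord : (↑(c00elem (φ j + 1) - a) : lp (fun _ : ℕ => ℝ) ⊤) (N+1)
          = 1/((N:ℝ)+2)^2 := by
        have h2 : (↑(c00elem (φ j + 1) - a) : lp (fun _ : ℕ => ℝ) ⊤) (N+1)
            = (↑(c00elem (φ j + 1)) : lp (fun _ : ℕ => ℝ) ⊤) (N+1)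
              - (↑a : lp (fun _ : ℕ => ℝ) ⊤) (N+1) := rfl
        rw [h2, haN, sub_zero]
        show (if N + 1 < φ j + 1 then 1 / (((N+1 : ℕ) : ℝ) + 1) ^ 2 else 0) = _
        rw [if_pos hidx]
        push_cast
        ring_nf
      calc 1/((N:ℝ)+2)^2
          = ‖(↑(c00elem (φ j + 1) - a) : lp (fun _ : ℕ => ℝ) ⊤) (N+1)‖ := by
            rw [hcoord, Real.norm_eq_abs, abs_of_nonneg (by positivity)]
        _ ≤ ‖(↑(c00elem (φ j + 1) - a) : lp (fun _ : ℕ => ℝ) ⊤)‖ :=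
            lp.norm_apply_le_norm ENNReal.top_ne_zero _ _
    have h0 : (0:ℝ) < 1/((N:ℝ)+2)^2 := by positivity
    obtain ⟨J, hJ⟩ := Metric.tendsto_atTop.1 hconv _ h0
    have hj := hJ (max J (N+1)) (le_max_left _ _)
    have hlo := hlow (max J (N+1)) (le_max_right _ _)
    simp only [Function.comp_apply] at hj
    linarith
end

section
/- There exists a Banach space E and a map f : E → E that is Lipschitz continuous on every compact subset of E (hence generates a composition operator mapping BV₁([0,1],E) into itself), but such that the composition operator C_f is not locally bounded: specifically, in E = ℓ²(ℝ) the map f((ξₙ)) = (sup_n n(2|ξₙ| - 1), 0, 0, ...) satisfies ‖C_f(x_k)‖₁ = k for the constant maps x_k ≡ e_k, while ‖x_k‖₁ = 1. -/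
open scoped ENNReal NNReal

section pVarLemmas

variable {E : Type*} [NormedAddCommGroup E] (x : ℝ → E)

lemma sum_le_pVar {a b : ℝ} (n : ℕ) (t : Fin (n + 1) → ℝ) (ht : StrictMono t)
    (h0 : t 0 = a) (hl : t (Fin.last n) = b) :
    ∑ i : Fin n, (‖x (t i.succ) - x (t i.castSucc)‖₊ : ℝ≥0∞) ^ (1 : ℝ) ≤ pVar 1 a b x :=
  le_iSup_of_le n <| le_iSup_of_le t <| le_iSup_of_le ht <| le_iSup_of_le h0 <|
    le_iSup_of_le hl le_rfl

lemma strictMono_snoc {n : ℕ} (t : Fin (n + 1) → ℝ) (ht : StrictMono t) {b : ℝ}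
    (hb : t (Fin.last n) < b) : StrictMono (Fin.snoc t b : Fin (n + 2) → ℝ) := by
  intro i j hij
  rcases Fin.eq_castSucc_or_eq_last j with ⟨j', rfl⟩ | rfl
  · rcases Fin.eq_castSucc_or_eq_last i with ⟨i', rfl⟩ | rfl
    · rw [Fin.snoc_castSucc, Fin.snoc_castSucc]
      exact ht (Fin.castSucc_lt_castSucc_iff.mp hij)
    · exact absurd hij (Fin.castSucc_lt_last j').asymm
  · rcases Fin.eq_castSucc_or_eq_last i with ⟨i', rfl⟩ | rfl
    · rw [Fin.snoc_castSucc, Fin.snoc_last]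
      exact lt_of_le_of_lt (ht.monotone (Fin.le_last i')) hb
    · exact absurd hij (lt_irrefl _)

lemma nnnorm_le_pVar {a b : ℝ} (hab : a < b) :
    (‖x b - x a‖₊ : ℝ≥0∞) ≤ pVar 1 a b x := by
  have h := sum_le_pVar x 1 ![a, b] ?_ rfl rfl
  · simpa [Fin.sum_univ_one, ENNReal.rpow_one] using h
  · intro i j hij
    fin_cases i <;> fin_cases j <;> simp_all

lemma pVar_add_le {a b : ℝ} (ha : 0 ≤ a) (hab : a < b) :
    pVar 1 0 a x + (‖x b - x a‖₊ : ℝ≥0∞) ≤ pVar 1 0 b x := by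
  set c : ℝ≥0∞ := (‖x b - x a‖₊ : ℝ≥0∞) with hc
  have hcb : c ≤ pVar 1 0 b x := by
    rcases ha.eq_or_lt with rfl | ha2
    · exact nnnorm_le_pVar x hab
    · have hmono : StrictMono ![(0 : ℝ), a, b] := by
        intro i j hij
        fin_cases i <;> fin_cases j <;> simp_all <;> linarith
      have h2 := sum_le_pVar x 2 ![0, a, b] hmono rfl rfl
      refine le_trans ?_ h2
      rw [Fin.sum_univ_two]
      simp only [ENNReal.rpow_one]
      have e1 : (![(0:ℝ), a, b] : Fin 3 → ℝ) ((0 : Fin 2).succ) = a := rfl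
      have e2 : (![(0:ℝ), a, b] : Fin 3 → ℝ) ((0 : Fin 2).castSucc) = 0 := rfl
      have e3 : (![(0:ℝ), a, b] : Fin 3 → ℝ) ((1 : Fin 2).succ) = b := rfl
      have e4 : (![(0:ℝ), a, b] : Fin 3 → ℝ) ((1 : Fin 2).castSucc) = a := rfl
      rw [e1, e2, e3, e4]
      exact self_le_add_left _ _
  have hle : pVar 1 0 a x ≤ pVar 1 0 b x - c := by
    refine iSup_le fun n => iSup_le fun t => iSup_le fun ht => iSup_le fun h0 => iSup_le fun hl => ?_
    refine ENNReal.le_sub_of_add_le_right ENNReal.coe_ne_top ?_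
    have hz : (Fin.snoc t b : Fin (n + 2) → ℝ) 0 = 0 := by
      show (Fin.snoc t b : Fin (n + 2) → ℝ) (Fin.castSucc 0) = 0
      rw [Fin.snoc_castSucc, h0]
    have hsnoc := sum_le_pVar x (n + 1) (Fin.snoc t b) (strictMono_snoc t ht (hl ▸ hab))
      hz (by rw [Fin.snoc_last])
    refine le_trans (le_of_eq ?_) hsnoc
    rw [Fin.sum_univ_castSucc]
    congr 1
    · refine Finset.sum_congr rfl fun i _ => ?_
      rw [Fin.succ_castSucc, Fin.snoc_castSucc, Fin.snoc_castSucc]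
    · rw [Fin.succ_last, Fin.snoc_last, Fin.snoc_castSucc, hl, ENNReal.rpow_one]
  calc pVar 1 0 a x + c ≤ (pVar 1 0 b x - c) + c := add_le_add hle le_rfl
    _ = pVar 1 0 b x := tsub_add_cancel_of_le hcb

lemma pVar_mono {a b : ℝ} (ha : 0 ≤ a) (hab : a ≤ b) :
    pVar 1 0 a x ≤ pVar 1 0 b x := by
  rcases hab.eq_or_lt with rfl | h
  · exact le_rfl
  · exact le_trans le_self_add (pVar_add_le x ha h)

lemma pVar_real_ineq {a b : ℝ} (ha : 0 ≤ a) (hab : a ≤ b) (hb : pVar 1 0 b x ≠ ⊤) :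
    ‖x b - x a‖ ≤ (pVar 1 0 b x).toReal - (pVar 1 0 a x).toReal := by
  rcases hab.eq_or_lt with rfl | h
  · simp
  · have ha' : pVar 1 0 a x ≠ ⊤ := ne_top_of_le_ne_top hb (pVar_mono x ha hab)
    have hadd := pVar_add_le x ha h
    have := ENNReal.toReal_mono hb hadd
    rw [ENNReal.toReal_add ha' ENNReal.coe_ne_top] at this
    simp only [ENNReal.coe_toReal, coe_nnnorm] at this
    linarith

lemma pVar_const {c : E} {a b : ℝ} : pVar 1 a b (fun _ => c) = 0 := by
  refine le_antisymm ?_ zero_le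
  refine iSup_le fun n => iSup_le fun t => iSup_le fun _ => iSup_le fun _ => iSup_le fun _ => ?_
  simp

end pVarLemmas


/-- The map `f : ℓ²(ℝ) → ℓ²(ℝ)` given by
`f((ξₙ)ₙ) = (sup_n n (2|ξₙ| - 1), 0, 0, …)` (the index `n : ℕ` here corresponds to the
index `n + 1 ∈ {1, 2, …}` in the classical formulation). -/
noncomputable def ellTwoF (ξ : lp (fun _ : ℕ => ℝ) 2) : lp (fun _ : ℕ => ℝ) 2 :=
  lp.single 2 0 (⨆ n : ℕ, ((n : ℝ) + 1) * (2 * |ξ n| - 1))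

noncomputable def gg (ξ : lp (fun _ : ℕ => ℝ) 2) : ℝ :=
  ⨆ n : ℕ, ((n : ℝ) + 1) * (2 * |ξ n| - 1)

lemma ellTwoF_eq (ξ : lp (fun _ : ℕ => ℝ) 2) : ellTwoF ξ = lp.single 2 0 (gg ξ) := rfl

lemma coord_small (ξ : lp (fun _ : ℕ => ℝ) 2) {δ : ℝ} (hδ : 0 < δ) :
    ∃ N : ℕ, ∀ n ≥ N, |ξ n| ≤ δ := by
  have hsum : Summable fun n => ‖ξ n‖ ^ (2 : ℝ≥0∞).toReal :=
    (lp.memℓp ξ).summable (by norm_num)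
  have h0 := hsum.tendsto_atTop_zero
  have hev : ∀ᶠ n in Filter.atTop, ‖ξ n‖ ^ (2 : ℝ≥0∞).toReal < δ ^ 2 :=
    h0.eventually (gt_mem_nhds (by positivity))
  rw [Filter.eventually_atTop] at hev
  obtain ⟨N, hN⟩ := hev
  refine ⟨N, fun n hn => ?_⟩
  have h1 := hN n hn
  have h2 : ‖ξ n‖ ^ (2 : ℝ≥0∞).toReal = ‖ξ n‖ ^ (2 : ℕ) := by
    rw [show (2 : ℝ≥0∞).toReal = ((2 : ℕ) : ℝ) by norm_num, Real.rpow_natCast]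
  rw [h2] at h1
  have h3 : ‖ξ n‖ < δ := by nlinarith [norm_nonneg (ξ n), abs_nonneg (‖ξ n‖ - δ)]
  simpa [Real.norm_eq_abs] using h3.le

lemma bddAbove_gg (ξ : lp (fun _ : ℕ => ℝ) 2) :
    BddAbove (Set.range fun n : ℕ => ((n : ℝ) + 1) * (2 * |ξ n| - 1)) := by
  obtain ⟨N, hN⟩ := coord_small ξ (by norm_num : (0 : ℝ) < 1 / 4)
  refine ⟨∑ m ∈ Finset.range N, |((m : ℝ) + 1) * (2 * |ξ m| - 1)|, ?_⟩
  rintro _ ⟨n, rfl⟩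
  by_cases hn : n < N
  · refine le_trans (le_abs_self _) ?_
    exact Finset.single_le_sum (f := fun mm : ℕ => |((mm : ℝ) + 1) * (2 * |ξ mm| - 1)|)
      (fun i _ => abs_nonneg _) (Finset.mem_range.2 hn)
  · push_neg at hn
    have h1 : |ξ n| ≤ 1 / 4 := hN n hn
    have h2 : ((n : ℝ) + 1) * (2 * |ξ n| - 1) ≤ 0 :=
      mul_nonpos_of_nonneg_of_nonpos (by positivity) (by linarith)
    exact h2.trans (Finset.sum_nonneg fun i _ => abs_nonneg _)

lemma neg_one_le_gg (ξ : lp (fun _ : ℕ => ℝ) 2) : (-1 : ℝ) ≤ gg ξ := by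
  refine le_trans ?_ (le_ciSup (bddAbove_gg ξ) 0)
  have := abs_nonneg (ξ 0)
  push_cast
  nlinarith

lemma coord_sub_le (ξ η : lp (fun _ : ℕ => ℝ) 2) (n : ℕ) : |ξ n - η n| ≤ ‖ξ - η‖ := by
  have h := lp.norm_apply_le_norm (by norm_num : (2 : ℝ≥0∞) ≠ 0) (ξ - η) n
  rw [show (ξ - η) n = ξ n - η n by rw [lp.coeFn_sub]; rfl, Real.norm_eq_abs] at h
  exact h

lemma gg_lip {S : Set (lp (fun _ : ℕ => ℝ) 2)} {N : ℕ} (hN : 1 ≤ N)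
    (hS : ∀ ξ ∈ S, ∀ n ≥ N, |ξ n| ≤ 1 / 4) :
    ∀ ξ ∈ S, ∀ η ∈ S, |gg ξ - gg η| ≤ 2 * N * ‖ξ - η‖ := by
  have key : ∀ ξ ∈ S, ∀ η ∈ S, gg ξ - gg η ≤ 2 * N * ‖ξ - η‖ := by
    intro ξ hξ η hη
    rw [sub_le_iff_le_add, gg]
    refine ciSup_le fun n => ?_
    by_cases hn : n < N
    · have hcoord := coord_sub_le ξ η n
      have h2 : ((n : ℝ) + 1) * (2 * |η n| - 1) ≤ gg η := le_ciSup (bddAbove_gg η) n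
      have hn1 : (n : ℝ) + 1 ≤ N := by exact_mod_cast hn
      have habs : |ξ n| - |η n| ≤ |ξ n - η n| := abs_sub_abs_le_abs_sub _ _
      have hnn : (0 : ℝ) ≤ (n : ℝ) + 1 := by positivity
      have step : ((n : ℝ) + 1) * (2 * |ξ n| - 1) - ((n : ℝ) + 1) * (2 * |η n| - 1)
          ≤ 2 * N * ‖ξ - η‖ := by
        have e : ((n : ℝ) + 1) * (2 * |ξ n| - 1) - ((n : ℝ) + 1) * (2 * |η n| - 1)
            = 2 * ((n : ℝ) + 1) * (|ξ n| - |η n|) := by ring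
        rw [e]
        calc 2 * ((n : ℝ) + 1) * (|ξ n| - |η n|) ≤ 2 * ((n : ℝ) + 1) * |ξ n - η n| := by
              apply mul_le_mul_of_nonneg_left habs; positivity
          _ ≤ 2 * N * ‖ξ - η‖ := by
              apply mul_le_mul (by linarith) hcoord (abs_nonneg _) (by positivity)
      linarith
    · push_neg at hn
      have h1 := hS ξ hξ n hn
      have h2 := neg_one_le_gg η
      have hn1 : (1 : ℝ) ≤ (n : ℝ) := by exact_mod_cast hN.trans hn
      have hterm : ((n : ℝ) + 1) * (2 * |ξ n| - 1) ≤ -1 := by nlinarith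
      have hpos : (0 : ℝ) ≤ 2 * N * ‖ξ - η‖ := by positivity
      linarith
  intro ξ hξ η hη
  rw [abs_sub_le_iff]
  exact ⟨key ξ hξ η hη, by rw [norm_sub_rev]; exact key η hη ξ hξ⟩

lemma single_sub (a b : ℝ) :
    (lp.single 2 0 a : lp (fun _ : ℕ => ℝ) 2) - lp.single 2 0 b = lp.single 2 0 (a - b) := by
  apply lp.ext
  funext j
  rw [lp.coeFn_sub]
  by_cases h : j = 0
  · subst h
    simp [lp.single_apply_self]
  · simp [lp.single_apply_ne _ _ _ h]

lemma norm_ellTwoF_sub (ξ η : lp (fun _ : ℕ => ℝ) 2) :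
    ‖ellTwoF ξ - ellTwoF η‖ = |gg ξ - gg η| := by
  rw [ellTwoF_eq, ellTwoF_eq, single_sub]
  have := lp.norm_single (E := fun _ : ℕ => ℝ) (p := 2) (by norm_num) 0 (gg ξ - gg η)
  simpa [Real.norm_eq_abs] using this

lemma tail_small {S : Set (lp (fun _ : ℕ => ℝ) 2)} (hS : TotallyBounded S) :
    ∃ N : ℕ, 1 ≤ N ∧ ∀ ξ ∈ S, ∀ n ≥ N, |ξ n| ≤ 1 / 4 := by
  obtain ⟨t, htf, hcov⟩ := Metric.totallyBounded_iff.1 hS (1 / 8) (by norm_num)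
  have hch : ∀ y : lp (fun _ : ℕ => ℝ) 2, ∃ N : ℕ, ∀ n ≥ N, |y n| ≤ 1 / 8 :=
    fun y => coord_small y (by norm_num)
  choose Ny hNy using hch
  classical
  refine ⟨htf.toFinset.sup Ny + 1, le_add_self.trans le_rfl |>.trans le_rfl |>.trans le_rfl, ?_⟩
  intro ξ hξ n hn
  obtain ⟨y, hy, hball⟩ := Set.mem_iUnion₂.1 (hcov hξ)
  have hny : Ny y ≤ n := le_trans (le_trans (Finset.le_sup (htf.mem_toFinset.2 hy)) (Nat.le_succ _)) hn
  have h1 : |y n| ≤ 1 / 8 := hNy y n hny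
  have h2 : |ξ n - y n| ≤ ‖ξ - y‖ := coord_sub_le ξ y n
  have h3 : ‖ξ - y‖ < 1 / 8 := by rwa [Metric.mem_ball, dist_eq_norm] at hball
  calc |ξ n| ≤ |ξ n - y n| + |y n| := by
        have := abs_sub_abs_le_abs_sub (ξ n) (y n); have := abs_add_le (ξ n - y n) (y n)
        calc |ξ n| = |(ξ n - y n) + y n| := by ring_nf
          _ ≤ |ξ n - y n| + |y n| := abs_add_le _ _
    _ ≤ 1 / 4 := by linarith
lemma image_tb {E : Type*} [NormedAddCommGroup E] (x : ℝ → E) (hx : pVar 1 0 1 x ≠ ⊤) :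
    TotallyBounded (x '' Set.Icc (0 : ℝ) 1) := by
  rw [Metric.totallyBounded_iff]
  intro ε hε
  classical
  set v : ℝ → ℝ := fun s => (pVar 1 0 s x).toReal with hv
  have hfin : ∀ s ∈ Set.Icc (0:ℝ) 1, pVar 1 0 s x ≠ ⊤ :=
    fun s hs => ne_top_of_le_ne_top hx (pVar_mono x hs.1 hs.2)
  have hmono : ∀ a b : ℝ, 0 ≤ a → a ≤ b → b ≤ 1 → v a ≤ v b := by
    intro a b ha hab hb1
    exact ENNReal.toReal_mono (hfin b ⟨ha.trans hab, hb1⟩) (pVar_mono x ha hab)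
  have hkey : ∀ a b : ℝ, 0 ≤ a → a ≤ b → b ≤ 1 → ‖x b - x a‖ ≤ v b - v a := by
    intro a b ha hab hb1
    exact pVar_real_ineq x ha hab (hfin b ⟨ha.trans hab, hb1⟩)
  have hVnn : ∀ s, 0 ≤ v s := fun s => ENNReal.toReal_nonneg
  set δ := ε / 2 with hδdef
  have hδ : 0 < δ := by positivity
  set m := ⌊v 1 / δ⌋₊ + 1 with hm
  set P : ℕ → Set ℝ := fun j =>
    {s | s ∈ Set.Icc (0:ℝ) 1 ∧ (j : ℝ) * δ ≤ v s ∧ v s < ((j : ℝ) + 1) * δ} with hP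
  set r : ℕ → ℝ := fun j => if h : (P j).Nonempty then h.choose else 0 with hr
  refine ⟨(fun j => x (r j)) '' Set.Iio m, (Set.finite_Iio m).image _, ?_⟩
  rintro _ ⟨s, hs, rfl⟩
  set j := ⌊v s / δ⌋₊ with hj
  have hjl : (j : ℝ) * δ ≤ v s := by
    have h := Nat.floor_le (div_nonneg (hVnn s) hδ.le)
    calc (j : ℝ) * δ ≤ (v s / δ) * δ := mul_le_mul_of_nonneg_right h hδ.le
      _ = v s := by field_simp
  have hju : v s < ((j : ℝ) + 1) * δ := by
    have h := Nat.lt_floor_add_one (v s / δ)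
    have := (div_lt_iff₀ hδ).1 h
    push_cast at this ⊢
    linarith
  have hjm : j < m := by
    have : j ≤ ⌊v 1 / δ⌋₊ := Nat.floor_mono (by
      gcongr
      exact hmono s 1 hs.1 hs.2 le_rfl)
    omega
  have hPn : (P j).Nonempty := ⟨s, hs, hjl, hju⟩
  have hrP : r j ∈ P j := by rw [hr]; simp only [dif_pos hPn]; exact hPn.choose_spec
  refine Set.mem_iUnion₂.2 ⟨x (r j), ⟨j, hjm, rfl⟩, ?_⟩
  rw [Metric.mem_ball, dist_eq_norm]
  obtain ⟨hrIcc, hrl, hru⟩ := hrP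
  rcases le_total (r j) s with h | h
  · have := hkey (r j) s hrIcc.1 h hs.2
    have hd : v s - v (r j) < δ := by linarith
    linarith [hδdef ▸ hδ, (by linarith : ‖x s - x (r j)‖ < δ)]
  · have := hkey s (r j) hs.1 h hrIcc.2
    rw [norm_sub_rev]
    linarith
lemma gg_single (k : ℕ) : gg (lp.single 2 k (1 : ℝ)) = (k : ℝ) + 1 := by
  have happ : ∀ n : ℕ, (lp.single 2 k (1 : ℝ) : lp (fun _ : ℕ => ℝ) 2) n
      = if n = k then 1 else 0 := by
    intro n
    by_cases h : n = k
    · subst h; simp [lp.single_apply_self]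
    · simp [lp.single_apply_ne _ _ _ h, h]
  refine le_antisymm (ciSup_le fun n => ?_) ?_
  · rw [happ]
    by_cases h : n = k
    · subst h; rw [if_pos rfl]; norm_num
    · rw [if_neg h, abs_zero]
      have h1 : (0 : ℝ) ≤ (n : ℝ) := Nat.cast_nonneg n
      have h2 : (0 : ℝ) ≤ (k : ℝ) := Nat.cast_nonneg k
      nlinarith
  · have h := le_ciSup (bddAbove_gg (lp.single 2 k (1 : ℝ))) k
    rw [happ k, if_pos rfl] at h
    refine le_trans (le_of_eq ?_) h
    norm_num

lemma norm_single_one (k : ℕ) : ‖(lp.single 2 k (1 : ℝ) : lp (fun _ : ℕ => ℝ) 2)‖ = 1 := by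
  have := lp.norm_single (E := fun _ : ℕ => ℝ) (p := 2) (by norm_num) k (1 : ℝ)
  simpa using this

lemma norm_ellTwoF_single (k : ℕ) :
    ‖ellTwoF (lp.single 2 k (1 : ℝ))‖ = (k : ℝ) + 1 := by
  rw [ellTwoF_eq]
  have := lp.norm_single (E := fun _ : ℕ => ℝ) (p := 2) (by norm_num) 0 (gg (lp.single 2 k (1 : ℝ)))
  rw [this, Real.norm_eq_abs, gg_single, abs_of_nonneg (by positivity)]


/-- In `E = ℓ²(ℝ)` the map `ellTwoF` is Lipschitz continuous on every compact subset of
`E` (hence generates a composition operator mapping `BV₁([0,1],E)` into itself), yet the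
composition operator it generates is not locally bounded: for the constant maps
`x_k ≡ e_k` one has `‖x_k‖₁ = 1` while `‖C_f(x_k)‖₁ = k + 1` (where `e_k` is the `k`-th
standard unit vector, `k + 1` being its index in the classical `1`-based enumeration). -/
theorem ellTwoF_not_locally_bounded :
    (∀ K : Set (lp (fun _ : ℕ => ℝ) 2), IsCompact K → ∃ L : ℝ,
        ∀ u ∈ K, ∀ w ∈ K, ‖ellTwoF u - ellTwoF w‖ ≤ L * ‖u - w‖) ∧
    (∀ x : ℝ → lp (fun _ : ℕ => ℝ) 2, pVar 1 0 1 x ≠ ⊤ →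
        pVar 1 0 1 (fun t => ellTwoF (x t)) ≠ ⊤) ∧
    (∀ k : ℕ,
        ‖(lp.single 2 k 1 : lp (fun _ : ℕ => ℝ) 2)‖
            + (pVar 1 0 1 (fun _ : ℝ => (lp.single 2 k 1 : lp (fun _ : ℕ => ℝ) 2))).toReal = 1 ∧
        ‖ellTwoF ((lp.single 2 k 1 : lp (fun _ : ℕ => ℝ) 2))‖
            + (pVar 1 0 1 (fun _ : ℝ => ellTwoF ((lp.single 2 k 1 : lp (fun _ : ℕ => ℝ) 2)))).toReal
            = (k : ℝ) + 1) ∧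
    ¬ ∃ M : ℝ, ∀ x : ℝ → lp (fun _ : ℕ => ℝ) 2, pVar 1 0 1 x ≠ ⊤ →
        ‖x 0‖ + (pVar 1 0 1 x).toReal ≤ 1 →
        ‖ellTwoF (x 0)‖ + (pVar 1 0 1 (fun t => ellTwoF (x t))).toReal ≤ M := by
  have lipTB : ∀ S : Set (lp (fun _ : ℕ => ℝ) 2), TotallyBounded S →
      ∃ L : ℝ, 0 ≤ L ∧ ∀ u ∈ S, ∀ w ∈ S, ‖ellTwoF u - ellTwoF w‖ ≤ L * ‖u - w‖ := by
    intro S hS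
    obtain ⟨N, hN1, hN⟩ := tail_small hS
    refine ⟨2 * N, by positivity, fun u hu w hw => ?_⟩
    rw [norm_ellTwoF_sub]
    exact gg_lip hN1 hN u hu w hw
  have part3 : ∀ k : ℕ,
      ‖(lp.single 2 k 1 : lp (fun _ : ℕ => ℝ) 2)‖
          + (pVar 1 0 1 (fun _ : ℝ => (lp.single 2 k 1 : lp (fun _ : ℕ => ℝ) 2))).toReal = 1 ∧
      ‖ellTwoF ((lp.single 2 k 1 : lp (fun _ : ℕ => ℝ) 2))‖
          + (pVar 1 0 1 (fun _ : ℝ => ellTwoF ((lp.single 2 k 1 : lp (fun _ : ℕ => ℝ) 2)))).toReal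
          = (k : ℝ) + 1 := by
    intro k
    constructor
    · rw [pVar_const, norm_single_one]; simp
    · rw [pVar_const, norm_ellTwoF_single]; simp
  have part2 : ∀ x : ℝ → lp (fun _ : ℕ => ℝ) 2, pVar 1 0 1 x ≠ ⊤ →
      pVar 1 0 1 (fun t => ellTwoF (x t)) ≠ ⊤ := by
    intro x hx
    obtain ⟨L, hL0, hL⟩ := lipTB (x '' Set.Icc 0 1) (image_tb x hx)
    have hbound : pVar 1 0 1 (fun t => ellTwoF (x t)) ≤ ENNReal.ofReal L * pVar 1 0 1 x := by
      refine iSup_le fun n => iSup_le fun t => iSup_le fun ht => iSup_le fun h0 =>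
        iSup_le fun hl => ?_
      have hmem : ∀ i : Fin (n + 1), x (t i) ∈ x '' Set.Icc (0:ℝ) 1 := fun i =>
        ⟨t i, ⟨by rw [← h0]; exact ht.monotone (Fin.zero_le i),
          by rw [← hl]; exact ht.monotone (Fin.le_last i)⟩, rfl⟩
      calc ∑ i : Fin n, (‖ellTwoF (x (t i.succ)) - ellTwoF (x (t i.castSucc))‖₊ : ℝ≥0∞) ^ (1 : ℝ)
          ≤ ∑ i : Fin n, ENNReal.ofReal L * (‖x (t i.succ) - x (t i.castSucc)‖₊ : ℝ≥0∞) ^ (1 : ℝ) := by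
            refine Finset.sum_le_sum fun i _ => ?_
            rw [ENNReal.rpow_one, ENNReal.rpow_one, ← enorm_eq_nnnorm, ← enorm_eq_nnnorm, ← ofReal_norm, ← ofReal_norm,
              ← ENNReal.ofReal_mul hL0]
            exact ENNReal.ofReal_le_ofReal
              (hL _ (hmem i.succ) _ (hmem i.castSucc))
        _ = ENNReal.ofReal L * ∑ i : Fin n, (‖x (t i.succ) - x (t i.castSucc)‖₊ : ℝ≥0∞) ^ (1 : ℝ) :=
            (Finset.mul_sum _ _ _).symm
        _ ≤ ENNReal.ofReal L * pVar 1 0 1 x :=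
            mul_le_mul_right (sum_le_pVar x n t ht h0 hl) _
    exact ne_top_of_le_ne_top (ENNReal.mul_ne_top ENNReal.ofReal_ne_top hx) hbound
  refine ⟨fun K hK => ?_, part2, part3, ?_⟩
  · obtain ⟨L, _, hL⟩ := lipTB K hK.totallyBounded
    exact ⟨L, hL⟩
  · rintro ⟨M, hM⟩
    set k := ⌈M⌉₊ with hk
    have h3 := part3 k
    have hfin : pVar 1 0 1 (fun _ : ℝ => (lp.single 2 k 1 : lp (fun _ : ℕ => ℝ) 2)) ≠ ⊤ := by
      rw [pVar_const]; exact ENNReal.zero_ne_top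
    have h := hM (fun _ => lp.single 2 k 1) hfin (le_of_eq h3.1)
    rw [h3.2] at h
    have := Nat.le_ceil M
    have hlt : M < (k : ℝ) + 1 := by
      rw [hk]; push_cast at this ⊢; linarith
    linarith
end

section
/- Let E be a normed space, 1 ≤ p ≤ q < ∞, and let f : E → E be Hölder continuous on bounded subsets of E with exponent p/q. Then the composition operator C_f : BV_p([a,b],E) → BV_q([a,b],E) is locally bounded; in fact, for every r > 0 and every x with ‖x‖_p ≤ r, one has ‖C_f(x)‖_q ≤ ‖f(0)‖ + 2 L_r r^{p/q}, where L_r is the Hölder constant of f on the closed ball of radius r. -/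
open scoped ENNReal NNReal

lemma le_pVar {E : Type*} [NormedAddCommGroup E] (p a b : ℝ) (x : ℝ → E)
    {n : ℕ} {t : Fin (n + 1) → ℝ} (hmono : StrictMono t) (h0 : t 0 = a)
    (hlast : t (Fin.last n) = b) :
    ∑ i : Fin n, (‖x (t i.succ) - x (t i.castSucc)‖₊ : ℝ≥0∞) ^ p ≤ pVar p a b x := by
  rw [pVar]
  exact le_iSup_of_le n (le_iSup_of_le t (le_iSup_of_le hmono (le_iSup_of_le h0
    (le_iSup_of_le hlast le_rfl))))

lemma coe_nnnorm_rpow {E : Type*} [NormedAddCommGroup E] (v : E) {p : ℝ} (hp : 0 ≤ p) :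
    (‖v‖₊ : ℝ≥0∞) ^ p = ENNReal.ofReal (‖v‖ ^ p) := by
  rw [show (‖v‖₊ : ℝ≥0∞) = ENNReal.ofReal ‖v‖ from (ofReal_norm v).symm, ENNReal.ofReal_rpow_of_nonneg (norm_nonneg v) hp]

lemma pVar_single {E : Type*} [NormedAddCommGroup E] {p : ℝ} (a b : ℝ) (hp : 0 < p)
    (x : ℝ → E) {c : ℝ} (hac : a ≤ c) (hcb : c ≤ b) :
    ENNReal.ofReal (‖x c - x a‖ ^ p) ≤ pVar p a b x := by
  rcases eq_or_lt_of_le hac with rfl | hac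
  · simp [Real.zero_rpow hp.ne']
  rcases eq_or_lt_of_le hcb with rfl | hcb
  · -- partition a < c = b
    have hmono : StrictMono (![a, c] : Fin 2 → ℝ) := by
      intro i j hij
      fin_cases i <;> fin_cases j <;> simp_all
    have h := le_pVar p a c x hmono (by simp) (by simp [Fin.last])
    refine le_trans ?_ h
    rw [← coe_nnnorm_rpow _ hp.le]
    simp [Fin.sum_univ_succ]
  · -- partition a < c < b
    have hmono : StrictMono (![a, c, b] : Fin 3 → ℝ) := by
      intro i j hij
      fin_cases i <;> fin_cases j <;> simp_all <;> linarith
    have h := le_pVar p a b x hmono (by simp) (by simp [Fin.last])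
    refine le_trans ?_ h
    rw [← coe_nnnorm_rpow _ hp.le]
    calc ((‖x c - x a‖₊ : ℝ≥0∞)) ^ p
        ≤ (‖x (![a,c,b] (Fin.succ 0)) - x (![a,c,b] (Fin.castSucc 0))‖₊ : ℝ≥0∞) ^ p
          + (‖x (![a,c,b] (Fin.succ 1)) - x (![a,c,b] (Fin.castSucc 1))‖₊ : ℝ≥0∞) ^ p := by
          simp
      _ = _ := by simp [Fin.sum_univ_succ]

lemma diff_le_pVar {E : Type*} [NormedAddCommGroup E] {p a b : ℝ} (hp : 0 < p)
    {x : ℝ → E} (hx : pVar p a b x ≠ ⊤) {c : ℝ} (hac : a ≤ c) (hcb : c ≤ b) :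
    ‖x c - x a‖ ≤ (pVar p a b x).toReal ^ (1 / p) := by
  have h1 := pVar_single a b hp x hac hcb
  have h2 : ‖x c - x a‖ ^ p ≤ (pVar p a b x).toReal :=
    (ENNReal.ofReal_le_iff_le_toReal hx).mp h1
  calc ‖x c - x a‖ = (‖x c - x a‖ ^ p) ^ (1 / p) := by
        rw [← Real.rpow_mul (norm_nonneg _), mul_one_div_cancel hp.ne', Real.rpow_one]
    _ ≤ (pVar p a b x).toReal ^ (1 / p) :=
        Real.rpow_le_rpow (Real.rpow_nonneg (norm_nonneg _) _) h2 (by positivity)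

/-- If `f` is Hölder continuous with exponent `p/q` on bounded subsets of `E`, then the
composition operator `C_f : BV_p([a,b],E) → BV_q([a,b],E)` is locally bounded; in fact
`‖C_f(x)‖_q ≤ ‖f 0‖ + 2 L_r r^(p/q)` whenever `‖x‖_p ≤ r`, where `L_r` is the Hölder
constant of `f` on the closed ball of radius `r`. -/
theorem comp_locally_bounded_of_holder {E : Type*} [NormedAddCommGroup E]
    (p q a b : ℝ) (hp : 1 ≤ p) (hpq : p ≤ q) (hab : a ≤ b)
    (f : E → E) (r : ℝ) (hr : 0 < r) (L : ℝ) (hL : 0 ≤ L)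
    (hf : ∀ u ∈ Metric.closedBall (0 : E) r, ∀ w ∈ Metric.closedBall (0 : E) r,
      ‖f u - f w‖ ≤ L * ‖u - w‖ ^ (p / q))
    (x : ℝ → E) (hx : pVar p a b x ≠ ⊤)
    (hxr : ‖x a‖ + (pVar p a b x).toReal ^ (1 / p) ≤ r) :
    ‖f (x a)‖ + (pVar q a b (fun t => f (x t))).toReal ^ (1 / q)
      ≤ ‖f 0‖ + 2 * L * r ^ (p / q) := by
  have hp0 : 0 < p := lt_of_lt_of_le one_pos hp
  have hq0 : 0 < q := lt_of_lt_of_le hp0 hpq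
  set V := pVar p a b x with hV
  have hV1p : V.toReal ^ (1 / p) ≤ r :=
    le_trans (le_add_of_nonneg_left (norm_nonneg _)) hxr
  have hxball : ∀ c, a ≤ c → c ≤ b → x c ∈ Metric.closedBall (0 : E) r := by
    intro c h1 h2
    rw [Metric.mem_closedBall, dist_zero_right]
    calc ‖x c‖ = ‖x a + (x c - x a)‖ := by rw [add_sub_cancel]
      _ ≤ ‖x a‖ + ‖x c - x a‖ := norm_add_le _ _
      _ ≤ ‖x a‖ + V.toReal ^ (1 / p) := by
          gcongr; exact diff_le_pVar hp0 hx h1 h2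
      _ ≤ r := hxr
  -- variation bound
  have hW : pVar q a b (fun t => f (x t)) ≤ ENNReal.ofReal (L ^ q) * V := by
    rw [pVar]
    refine iSup_le fun n => iSup_le fun t => iSup_le fun hmono => iSup_le fun h0 =>
      iSup_le fun hlast => ?_
    have hmem : ∀ i : Fin (n + 1), a ≤ t i ∧ t i ≤ b := fun i =>
      ⟨h0 ▸ hmono.monotone (Fin.zero_le i), hlast ▸ hmono.monotone (Fin.le_last i)⟩
    have hterm : ∀ i : Fin n,
        (‖f (x (t i.succ)) - f (x (t i.castSucc))‖₊ : ℝ≥0∞) ^ q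
          ≤ ENNReal.ofReal (L ^ q) * (‖x (t i.succ) - x (t i.castSucc)‖₊ : ℝ≥0∞) ^ p := by
      intro i
      rw [coe_nnnorm_rpow _ hq0.le, coe_nnnorm_rpow _ hp0.le,
        ← ENNReal.ofReal_mul (Real.rpow_nonneg hL q)]
      refine ENNReal.ofReal_le_ofReal ?_
      have hball1 := hxball _ (hmem i.succ).1 (hmem i.succ).2
      have hball2 := hxball _ (hmem i.castSucc).1 (hmem i.castSucc).2
      calc ‖f (x (t i.succ)) - f (x (t i.castSucc))‖ ^ q
          ≤ (L * ‖x (t i.succ) - x (t i.castSucc)‖ ^ (p / q)) ^ q :=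
            Real.rpow_le_rpow (norm_nonneg _) (hf _ hball1 _ hball2) hq0.le
        _ = L ^ q * (‖x (t i.succ) - x (t i.castSucc)‖ ^ (p / q)) ^ q :=
            Real.mul_rpow hL (Real.rpow_nonneg (norm_nonneg _) _)
        _ = L ^ q * ‖x (t i.succ) - x (t i.castSucc)‖ ^ p := by
            rw [← Real.rpow_mul (norm_nonneg _), div_mul_cancel₀ p hq0.ne']
    calc ∑ i : Fin n, (‖f (x (t i.succ)) - f (x (t i.castSucc))‖₊ : ℝ≥0∞) ^ q
        ≤ ∑ i : Fin n, ENNReal.ofReal (L ^ q)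
            * (‖x (t i.succ) - x (t i.castSucc)‖₊ : ℝ≥0∞) ^ p :=
          Finset.sum_le_sum fun i _ => hterm i
      _ = ENNReal.ofReal (L ^ q)
            * ∑ i : Fin n, (‖x (t i.succ) - x (t i.castSucc)‖₊ : ℝ≥0∞) ^ p := by
          rw [Finset.mul_sum]
      _ ≤ ENNReal.ofReal (L ^ q) * V :=
          mul_le_mul_right (le_pVar p a b x hmono h0 hlast) _
  set W := pVar q a b (fun t => f (x t)) with hWdef
  have hWne : W ≠ ⊤ := ne_top_of_le_ne_top (ENNReal.mul_ne_top ENNReal.ofReal_ne_top hx) hW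
  have hWt : W.toReal ≤ L ^ q * V.toReal := by
    have := ENNReal.toReal_mono (ENNReal.mul_ne_top ENNReal.ofReal_ne_top hx) hW
    rwa [ENNReal.toReal_mul, ENNReal.toReal_ofReal (Real.rpow_nonneg hL q)] at this
  have h2 : W.toReal ^ (1 / q) ≤ L * r ^ (p / q) := by
    calc W.toReal ^ (1 / q) ≤ (L ^ q * V.toReal) ^ (1 / q) :=
          Real.rpow_le_rpow ENNReal.toReal_nonneg hWt (by positivity)
      _ = L * V.toReal ^ (1 / q) := by
          rw [Real.mul_rpow (Real.rpow_nonneg hL q) ENNReal.toReal_nonneg,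
            ← Real.rpow_mul hL, mul_one_div_cancel hq0.ne', Real.rpow_one]
      _ ≤ L * r ^ (p / q) := by
          have hVq : V.toReal ^ (1 / q) = (V.toReal ^ (1 / p)) ^ (p / q) := by
            rw [← Real.rpow_mul ENNReal.toReal_nonneg]
            congr 1
            field_simp
          rw [hVq]
          exact mul_le_mul_of_nonneg_left
            (Real.rpow_le_rpow (Real.rpow_nonneg ENNReal.toReal_nonneg _) hV1p
              (by positivity)) hL
  have hxa : ‖x a‖ ≤ r := by
    have := hxball a le_rfl hab
    rwa [Metric.mem_closedBall, dist_zero_right] at this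
  have h1 : ‖f (x a)‖ ≤ ‖f 0‖ + L * r ^ (p / q) := by
    have hmem0 : (0 : E) ∈ Metric.closedBall (0 : E) r := by simp [hr.le]
    calc ‖f (x a)‖ = ‖f 0 + (f (x a) - f 0)‖ := by rw [add_sub_cancel]
      _ ≤ ‖f 0‖ + ‖f (x a) - f 0‖ := norm_add_le _ _
      _ ≤ ‖f 0‖ + L * ‖x a - 0‖ ^ (p / q) := by
          gcongr
          exact hf _ (hxball a le_rfl hab) _ hmem0
      _ ≤ ‖f 0‖ + L * r ^ (p / q) := by
          rw [sub_zero]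
          have : L * ‖x a‖ ^ (p / q) ≤ L * r ^ (p / q) :=
            mul_le_mul_of_nonneg_left
              (Real.rpow_le_rpow (norm_nonneg _) hxa (by positivity)) hL
          linarith
  linarith
end

section
/- Let E be a normed space, 1 ≤ p ≤ q < ∞, and suppose the composition operator C_f generated by f : E → E maps BV_p([a,b],E) into BV_q([a,b],E) and is locally bounded. Then f is Hölder continuous on bounded subsets of E with exponent p/q. -/
open scoped ENNReal NNReal

noncomputable def stepFn {E : Type*} (a b : ℝ) (k : ℕ) (u w : E) (t : ℝ) : E :=
  if Even ⌊(k : ℝ) * (t - a) / (b - a)⌋ then u else w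

theorem fin_telescope (n : ℕ) (F : Fin (n+1) → ℤ) : ∑ i : Fin n, (F i.succ - F i.castSucc) = F (Fin.last n) - F 0 := by
  induction n with
  | zero => simp
  | succ n ih =>
    rw [Fin.sum_univ_castSucc]
    have := ih (fun i => F i.castSucc)
    simp only [Fin.succ_castSucc] at this ⊢
    rw [this]
    simp [Fin.succ_last]

theorem pVar_stepFn_le {E : Type*} [NormedAddCommGroup E] {a b : ℝ} (hab : a < b)
    {p : ℝ} (hp : 0 < p) (k : ℕ) (u w : E) :
    pVar p a b (stepFn a b k u w) ≤ (k : ℝ≥0∞) * (‖u - w‖₊ : ℝ≥0∞) ^ p := by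
  set g : ℝ → ℤ := fun t => ⌊(k : ℝ) * (t - a) / (b - a)⌋ with hg
  have hba : (0:ℝ) < b - a := by linarith
  have hgmono : Monotone g := by
    intro s t hst
    apply Int.floor_le_floor
    have h0 : (0:ℝ) ≤ (k:ℝ) := Nat.cast_nonneg k
    gcongr
  have hga : g a = 0 := by simp [hg]
  have hgb : g b = k := by
    have : (k : ℝ) * (b - a) / (b - a) = (k : ℝ) := by field_simp
    simp [hg, this]
  have hxg : ∀ s t : ℝ, g s = g t → stepFn a b k u w s = stepFn a b k u w t := by
    intro s t h
    simp only [stepFn]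
    rw [show ⌊(k : ℝ) * (s - a) / (b - a)⌋ = ⌊(k : ℝ) * (t - a) / (b - a)⌋ from h]
  have hxd : ∀ s t : ℝ, ‖stepFn a b k u w s - stepFn a b k u w t‖₊ ≤ ‖u - w‖₊ := by
    intro s t
    simp only [stepFn]
    split_ifs <;> simp [← nnnorm_neg (w - u), neg_sub]
  apply iSup_le; intro n
  apply iSup_le; intro t
  apply iSup_le; intro ht
  apply iSup_le; intro ht0
  apply iSup_le; intro htl
  set S : Finset (Fin n) := Finset.univ.filter (fun i => g (t i.succ) ≠ g (t i.castSucc)) with hS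
  have hcard : (S.card : ℤ) ≤ (k : ℤ) := by
    have htel : ∑ i : Fin n, (g (t i.succ) - g (t i.castSucc)) = (k:ℤ) := by
      rw [fin_telescope n (fun i => g (t i))]
      rw [htl, ht0, hga, hgb]; ring
    calc (S.card : ℤ) = ∑ _i ∈ S, (1:ℤ) := by simp
      _ ≤ ∑ i ∈ S, (g (t i.succ) - g (t i.castSucc)) := by
          apply Finset.sum_le_sum
          intro i hi
          have hne : g (t i.succ) ≠ g (t i.castSucc) := (Finset.mem_filter.mp hi).2
          have hle : g (t i.castSucc) ≤ g (t i.succ) :=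
            hgmono (le_of_lt (ht (Fin.castSucc_lt_succ : i.castSucc < i.succ)))
          omega
      _ ≤ ∑ i : Fin n, (g (t i.succ) - g (t i.castSucc)) := by
          apply Finset.sum_le_sum_of_subset_of_nonneg (Finset.filter_subset _ _)
          intro i _ _
          have hle : g (t i.castSucc) ≤ g (t i.succ) :=
            hgmono (le_of_lt (ht (Fin.castSucc_lt_succ : i.castSucc < i.succ)))
          omega
      _ = (k:ℤ) := htel
  calc ∑ i : Fin n, (‖stepFn a b k u w (t i.succ) - stepFn a b k u w (t i.castSucc)‖₊ : ℝ≥0∞) ^ p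
      = ∑ i ∈ S, (‖stepFn a b k u w (t i.succ) - stepFn a b k u w (t i.castSucc)‖₊ : ℝ≥0∞) ^ p := by
        symm
        apply Finset.sum_subset (Finset.filter_subset _ _)
        intro i _ hi
        have : g (t i.succ) = g (t i.castSucc) := by
          by_contra h
          exact hi (Finset.mem_filter.mpr ⟨Finset.mem_univ i, h⟩)
        rw [hxg _ _ this]
        simp [ENNReal.zero_rpow_of_pos hp]
    _ ≤ ∑ _i ∈ S, (‖u - w‖₊ : ℝ≥0∞) ^ p := by
        apply Finset.sum_le_sum
        intro i _
        exact ENNReal.rpow_le_rpow (by exact_mod_cast hxd _ _) hp.le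
    _ = (S.card : ℝ≥0∞) * (‖u - w‖₊ : ℝ≥0∞) ^ p := by
        rw [Finset.sum_const, nsmul_eq_mul]
    _ ≤ (k : ℝ≥0∞) * (‖u - w‖₊ : ℝ≥0∞) ^ p := by
        gcongr
        exact_mod_cast hcard

theorem stepFn_grid {E : Type*} {a b : ℝ} (hab : a < b) (k : ℕ) (hk : k ≠ 0) (u w : E)
    (j : ℕ) : stepFn a b k u w (a + (j : ℝ) * (b - a) / k) = if Even j then u else w := by
  have hba : (b - a) ≠ 0 := by linarith
  have hk' : (k:ℝ) ≠ 0 := Nat.cast_ne_zero.mpr hk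
  have h : (k : ℝ) * ((j : ℝ) * (b - a) / k) / (b - a) = (j : ℝ) := by
    field_simp
  simp [stepFn, h, Int.even_coe_nat]

theorem le_pVar_stepFn {E : Type*} [NormedAddCommGroup E] {a b : ℝ} (hab : a < b)
    (q : ℝ) (k : ℕ) (hk : k ≠ 0) (u w : E) (f : E → E) :
    (k : ℝ≥0∞) * (‖f u - f w‖₊ : ℝ≥0∞) ^ q
      ≤ pVar q a b (fun t => f (stepFn a b k u w t)) := by
  have hba : (0:ℝ) < b - a := by linarith
  have hk' : (0:ℝ) < (k:ℝ) := by exact_mod_cast Nat.pos_of_ne_zero hk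
  set t : Fin (k + 1) → ℝ := fun j => a + (j : ℝ) * (b - a) / k with ht
  have hmono : StrictMono t := by
    intro i j hij
    have : ((i:ℕ):ℝ) < ((j:ℕ):ℝ) := by exact_mod_cast hij
    simp only [ht]
    have h2 : ((i:ℕ):ℝ) * (b - a) / k < ((j:ℕ):ℝ) * (b - a) / k := by
      apply div_lt_div_of_pos_right _ hk'
      nlinarith
    linarith
  have h0 : t 0 = a := by simp [ht]
  have hl : t (Fin.last k) = b := by
    simp only [ht, Fin.val_last]
    field_simp
    ring
  have hterm : ∀ i : Fin k,
      (‖f (stepFn a b k u w (t i.succ)) - f (stepFn a b k u w (t i.castSucc))‖₊ : ℝ≥0∞) ^ q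
        = (‖f u - f w‖₊ : ℝ≥0∞) ^ q := by
    intro i
    have h1 : stepFn a b k u w (t i.succ) = if Even ((i:ℕ)+1) then u else w := by
      have : t i.succ = a + (((i:ℕ)+1 : ℕ) : ℝ) * (b - a) / k := by
        simp [ht, Fin.val_succ]
      rw [this, stepFn_grid hab k hk]
    have h2 : stepFn a b k u w (t i.castSucc) = if Even (i:ℕ) then u else w := by
      have : t i.castSucc = a + (((i:ℕ) : ℕ) : ℝ) * (b - a) / k := by
        simp [ht, Fin.coe_castSucc]
      rw [this, stepFn_grid hab k hk]
    rw [h1, h2]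
    rcases Nat.even_or_odd (i:ℕ) with he | ho
    · simp [he, Nat.even_add_one, ← nnnorm_neg (f u - f w), neg_sub]
    · simp [Nat.not_even_iff_odd.mpr ho, Nat.even_add_one]
  calc (k : ℝ≥0∞) * (‖f u - f w‖₊ : ℝ≥0∞) ^ q
      = ∑ i : Fin k,
          (‖f (stepFn a b k u w (t i.succ)) - f (stepFn a b k u w (t i.castSucc))‖₊ : ℝ≥0∞) ^ q := by
        simp [hterm, Finset.sum_const, nsmul_eq_mul]
    _ ≤ pVar q a b (fun s => f (stepFn a b k u w s)) := by
        refine le_iSup_of_le k ?_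
        refine le_iSup_of_le t ?_
        rw [iSup_pos hmono, iSup_pos h0, iSup_pos hl]

theorem stepFn_a {E : Type*} (a b : ℝ) (k : ℕ) (u w : E) : stepFn a b k u w a = u := by
  simp [stepFn]

/-- If the composition operator `C_f` maps `BV_p([a,b],E)` into `BV_q([a,b],E)` and is
locally bounded, then `f` is Hölder continuous with exponent `p/q` on every bounded
subset of `E`. -/
theorem holder_on_bounded_of_comp_locally_bounded {E : Type*} [NormedAddCommGroup E]
    (p q a b : ℝ) (hp : 1 ≤ p) (hpq : p ≤ q) (hab : a < b)
    (f : E → E)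
    (hf : ∀ x : ℝ → E, pVar p a b x ≠ ⊤ → pVar q a b (fun t => f (x t)) ≠ ⊤)
    (hloc : ∀ r : ℝ, 0 < r → ∃ M : ℝ, ∀ x : ℝ → E, pVar p a b x ≠ ⊤ →
      ‖x a‖ + (pVar p a b x).toReal ^ (1 / p) ≤ r →
      ‖f (x a)‖ + (pVar q a b (fun t => f (x t))).toReal ^ (1 / q) ≤ M) :
    ∀ K : Set E, Bornology.IsBounded K → ∃ L : ℝ, 0 ≤ L ∧
      ∀ u ∈ K, ∀ w ∈ K, ‖f u - f w‖ ≤ L * ‖u - w‖ ^ (p / q) := by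
  intro K hK
  have hp0 : (0:ℝ) < p := lt_of_lt_of_le one_pos hp
  have hq0 : (0:ℝ) < q := lt_of_lt_of_le hp0 hpq
  have hq1 : (1:ℝ) ≤ q := le_trans hp hpq
  obtain ⟨R0, hR0⟩ := hK.exists_norm_le
  set R : ℝ := max R0 1 with hR
  have hR1 : (1:ℝ) ≤ R := le_max_right _ _
  have hRpos : (0:ℝ) < R := lt_of_lt_of_le one_pos hR1
  have hRK : ∀ u ∈ K, ‖u‖ ≤ R := fun u hu => le_trans (hR0 u hu) (le_max_left _ _)
  obtain ⟨M, hM⟩ := hloc (3 * R) (by linarith)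
  set M0 : ℝ := max M 0 with hM0
  have hM0nn : (0:ℝ) ≤ M0 := le_max_right _ _
  refine ⟨M0 * 2 ^ (1/q) / (2*R) ^ (p/q), by positivity, ?_⟩
  intro u hu w hw
  rcases eq_or_ne u w with rfl | huw
  · simp [Real.zero_rpow (by positivity : p/q ≠ 0)]
  -- setup
  set d : ℝ := ‖u - w‖ with hd
  have hdpos : 0 < d := by simpa [hd] using sub_ne_zero_of_ne huw
  have hd2R : d ≤ 2 * R := by
    have h1 := hRK u hu
    have h2 := hRK w hw
    calc d ≤ ‖u‖ + ‖w‖ := norm_sub_le u w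
      _ ≤ 2 * R := by linarith
  set X : ℝ := (2*R/d) ^ p with hX
  have hXd : (2*R/d) ≥ 1 := (one_le_div hdpos).mpr hd2R
  have hX1 : 1 ≤ X := Real.one_le_rpow hXd hp0.le
  set k : ℕ := ⌊X⌋₊ with hk
  have hk1 : 1 ≤ k := Nat.le_floor (by exact_mod_cast hX1)
  have hk0 : k ≠ 0 := Nat.one_le_iff_ne_zero.mp hk1
  have hkX : (k:ℝ) ≤ X := Nat.floor_le (by linarith)
  have hkX2 : X / 2 ≤ (k:ℝ) := by
    rcases le_or_gt X 2 with h | h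
    · have : (1:ℝ) ≤ (k:ℝ) := by exact_mod_cast hk1
      linarith
    · have := Nat.lt_floor_add_one X
      push_cast at this ⊢
      linarith
  set x : ℝ → E := stepFn a b k u w with hx
  -- upper bound on pVar p x
  have hup : pVar p a b x ≤ (k : ℝ≥0∞) * (‖u - w‖₊ : ℝ≥0∞) ^ p := pVar_stepFn_le hab hp0 k u w
  have hfin : pVar p a b x ≠ ⊤ := by
    refine ne_top_of_le_ne_top ?_ hup
    exact ENNReal.mul_ne_top (ENNReal.natCast_ne_top k) (ENNReal.rpow_ne_top_of_nonneg hp0.le ENNReal.coe_ne_top)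
  have htoReal : (pVar p a b x).toReal ≤ (k:ℝ) * d ^ p := by
    have h2 : ((k : ℝ≥0∞) * (‖u - w‖₊ : ℝ≥0∞) ^ p).toReal = (k:ℝ) * d ^ p := by
      rw [ENNReal.toReal_mul, ← ENNReal.toReal_rpow]
      simp [hd]
    rw [← h2]
    exact ENNReal.toReal_mono (ENNReal.mul_ne_top (ENNReal.natCast_ne_top k)
      (ENNReal.rpow_ne_top_of_nonneg hp0.le ENNReal.coe_ne_top)) hup
  have hkd : (k:ℝ) * d ^ p ≤ (2*R) ^ p := by
    have : X * d ^ p = (2*R) ^ p := by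
      rw [hX, Real.div_rpow (by linarith) hdpos.le]
      field_simp
    nlinarith [Real.rpow_nonneg hdpos.le p]
  have hbound : ‖x a‖ + (pVar p a b x).toReal ^ (1/p) ≤ 3 * R := by
    have hxa : x a = u := stepFn_a a b k u w
    have h1 : ‖x a‖ ≤ R := by rw [hxa]; exact hRK u hu
    have h2 : (pVar p a b x).toReal ^ (1/p) ≤ 2 * R := by
      calc (pVar p a b x).toReal ^ (1/p) ≤ ((2*R) ^ p) ^ (1/p) := by
            apply Real.rpow_le_rpow ENNReal.toReal_nonneg (le_trans htoReal hkd) (by positivity)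
        _ = 2 * R := by
            rw [← Real.rpow_mul (by linarith), mul_one_div, div_self hp0.ne', Real.rpow_one]
    linarith
  have hMx := hM x hfin hbound
  have hVq := hf x hfin
  -- lower bound
  have hlow := le_pVar_stepFn hab q k hk0 u w f
  have hlowR : (k:ℝ) ^ (1/q) * ‖f u - f w‖ ≤ M0 := by
    have h1 : (k:ℝ) * ‖f u - f w‖ ^ q ≤ (pVar q a b (fun t => f (x t))).toReal := by
      have h2 : ((k : ℝ≥0∞) * (‖f u - f w‖₊ : ℝ≥0∞) ^ q).toReal = (k:ℝ) * ‖f u - f w‖ ^ q := by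
        rw [ENNReal.toReal_mul, ← ENNReal.toReal_rpow]
        simp
      rw [← h2]
      exact ENNReal.toReal_mono hVq hlow
    have h3 : ((k:ℝ) * ‖f u - f w‖ ^ q) ^ (1/q) = (k:ℝ) ^ (1/q) * ‖f u - f w‖ := by
      rw [Real.mul_rpow (by positivity) (by positivity),
        ← Real.rpow_mul (norm_nonneg _), mul_one_div, div_self hq0.ne', Real.rpow_one]
    calc (k:ℝ) ^ (1/q) * ‖f u - f w‖ = ((k:ℝ) * ‖f u - f w‖ ^ q) ^ (1/q) := h3.symm
      _ ≤ (pVar q a b (fun t => f (x t))).toReal ^ (1/q) :=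
          Real.rpow_le_rpow (by positivity) h1 (by positivity)
      _ ≤ M := by
          have := norm_nonneg (f (x a))
          linarith
      _ ≤ M0 := le_max_left _ _
  -- conclude
  have hkq : (X/2) ^ (1/q) ≤ (k:ℝ) ^ (1/q) :=
    Real.rpow_le_rpow (by linarith) hkX2 (by positivity)
  have hkqpos : (0:ℝ) < (X/2) ^ (1/q) := Real.rpow_pos_of_pos (by linarith) _
  have hDle : ‖f u - f w‖ ≤ M0 / (X/2) ^ (1/q) := by
    rw [le_div_iff₀ hkqpos]
    calc ‖f u - f w‖ * (X/2) ^ (1/q) ≤ ‖f u - f w‖ * (k:ℝ) ^ (1/q) := by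
          gcongr
      _ = (k:ℝ) ^ (1/q) * ‖f u - f w‖ := mul_comm _ _
      _ ≤ M0 := hlowR
  have hfinal : M0 / (X/2) ^ (1/q) = M0 * 2 ^ (1/q) / (2*R) ^ (p/q) * d ^ (p/q) := by
    have hXq : X ^ (1/q) = (2*R) ^ (p/q) / d ^ (p/q) := by
      rw [hX, ← Real.rpow_mul (by positivity), mul_one_div,
        Real.div_rpow (by linarith) hdpos.le]
    rw [Real.div_rpow (by linarith) (by norm_num), hXq]
    field_simp
  rw [← hfinal]
  exact hDle
end

section
/- Let E be a normed space, 1 ≤ p ≤ q < ∞, and suppose the composition operator C_f generated by f : E → E maps BV_p([a,b],E) into BV_q([a,b],E) and has bounded range (i.e., sup_{x ∈ BV_p} ‖C_f(x)‖_q < ∞). Then f is constant. -/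
open scoped ENNReal NNReal

/-- Lower bound for `pVar` from a concrete partition. -/
lemma le_pVar_aux {E : Type*} [NormedAddCommGroup E] (q a b : ℝ) (y : ℝ → E) (n : ℕ)
    (t : Fin (n + 1) → ℝ) (ht : StrictMono t) (h0 : t 0 = a) (hl : t (Fin.last n) = b) :
    ∑ i : Fin n, (‖y (t i.succ) - y (t i.castSucc)‖₊ : ℝ≥0∞) ^ q ≤ pVar q a b y := by
  rw [pVar]
  exact le_iSup_of_le n (le_iSup_of_le t (le_iSup_of_le ht (le_iSup_of_le h0
    (le_iSup_of_le hl le_rfl))))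

/-- A two-valued step function with finitely many "spikes" has finite `p`-variation. -/
lemma step_pVar_ne_top {E : Type*} [NormedAddCommGroup E] (p a b : ℝ) (hp : 0 < p)
    (S : Finset ℝ) (u w : E) :
    pVar p a b (fun s => if s ∈ S then u else w) ≠ ⊤ := by
  set c : ℝ≥0∞ := (‖u - w‖₊ : ℝ≥0∞) ^ p with hc
  have hct : c ≠ ⊤ := ENNReal.rpow_ne_top_of_nonneg hp.le ENNReal.coe_ne_top
  have hbound : pVar p a b (fun s => if s ∈ S then u else w)
      ≤ (S.card : ℝ≥0∞) * c + (S.card : ℝ≥0∞) * c := by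
    rw [pVar]
    refine iSup_le fun n => iSup_le fun t => iSup_le fun ht => iSup_le fun _ =>
      iSup_le fun _ => ?_
    have key : ∀ i : Fin n,
        (‖(if t i.succ ∈ S then u else w) - (if t i.castSucc ∈ S then u else w)‖₊ : ℝ≥0∞) ^ p
        ≤ (if t i.succ ∈ S then c else 0) + (if t i.castSucc ∈ S then c else 0) := by
      intro i
      have hrev : (‖w - u‖₊ : ℝ≥0∞) ^ p = c := by
        rw [hc, ← neg_sub u w, nnnorm_neg]
      by_cases h1 : t i.succ ∈ S <;> by_cases h2 : t i.castSucc ∈ S <;>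
        simp only [h1, h2, if_true, if_false]
      · simp [ENNReal.zero_rpow_of_pos hp]
      · exact le_add_right le_rfl
      · rw [hrev]; exact le_add_left le_rfl
      · simp [ENNReal.zero_rpow_of_pos hp]
    calc (∑ i : Fin n,
          (‖(if t i.succ ∈ S then u else w) - (if t i.castSucc ∈ S then u else w)‖₊ : ℝ≥0∞) ^ p)
        ≤ ∑ i : Fin n,
            ((if t i.succ ∈ S then c else 0) + (if t i.castSucc ∈ S then c else 0)) :=
          Finset.sum_le_sum fun i _ => key i
      _ = (∑ i : Fin n, if t i.succ ∈ S then c else 0)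
            + ∑ i : Fin n, if t i.castSucc ∈ S then c else 0 := Finset.sum_add_distrib
      _ ≤ (S.card : ℝ≥0∞) * c + (S.card : ℝ≥0∞) * c := by
          refine add_le_add ?_ ?_
          · rw [← Finset.sum_filter, Finset.sum_const, nsmul_eq_mul]
            refine mul_le_mul_left ?_ c
            exact Nat.cast_le.mpr (Finset.card_le_card_of_injOn (fun i => t i.succ)
                (fun i hi => (Finset.mem_filter.mp hi).2)
                (fun i _ j _ h => Fin.succ_injective _ (ht.injective h)))
          · rw [← Finset.sum_filter, Finset.sum_const, nsmul_eq_mul]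
            refine mul_le_mul_left ?_ c
            exact Nat.cast_le.mpr (Finset.card_le_card_of_injOn
                (fun i => t i.castSucc)
                (fun i hi => (Finset.mem_filter.mp hi).2)
                (fun i _ j _ h => Fin.castSucc_injective _ (ht.injective h)))
  refine ne_top_of_le_ne_top ?_ hbound
  exact ENNReal.add_ne_top.mpr ⟨ENNReal.mul_ne_top (ENNReal.natCast_ne_top _) hct,
    ENNReal.mul_ne_top (ENNReal.natCast_ne_top _) hct⟩

/-- A composition operator `C_f : BV_p([a,b],E) → BV_q([a,b],E)` with bounded range is
generated by a constant map `f`. -/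
theorem comp_bounded_range_implies_constant {E : Type*} [NormedAddCommGroup E]
    (p q a b : ℝ) (hp : 1 ≤ p) (hpq : p ≤ q) (hab : a < b)
    (f : E → E)
    (hf : ∀ x : ℝ → E, pVar p a b x ≠ ⊤ → pVar q a b (fun t => f (x t)) ≠ ⊤)
    (hbdd : ∃ M : ℝ, ∀ x : ℝ → E, pVar p a b x ≠ ⊤ →
      ‖f (x a)‖ + (pVar q a b (fun t => f (x t))).toReal ^ (1 / q) ≤ M) :
    ∀ u w : E, f u = f w := by
  intro u w
  by_contra hne
  obtain ⟨M, hM⟩ := hbdd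
  have hq : (0:ℝ) < q := lt_of_lt_of_le one_pos (hp.trans hpq)
  set d : ℝ := ‖f u - f w‖ with hd
  have hdpos : 0 < d := by
    simpa [hd] using sub_ne_zero.mpr hne
  -- main estimate for each n
  have main : ∀ n : ℕ, ((2 * n + 1 : ℕ) : ℝ) * d ^ q ≤ (M - ‖f w‖) ^ q := by
    intro n
    set N : ℕ := 2 * n + 1 with hN
    have hNpos : (0:ℝ) < N := by positivity
    set δ : ℝ := (b - a) / N with hδ
    have hδpos : 0 < δ := div_pos (sub_pos.mpr hab) hNpos
    set t : Fin (N + 1) → ℝ := fun j => a + (j : ℕ) * δ with htdef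
    have ht : StrictMono t := by
      intro i j hij
      have : ((i : ℕ) : ℝ) < ((j : ℕ) : ℝ) := by exact_mod_cast hij
      simpa [htdef] using mul_lt_mul_of_pos_right this hδpos
    have h0 : t 0 = a := by simp [htdef]
    have hl : t (Fin.last N) = b := by
      simp only [htdef, Fin.val_last]
      rw [hδ, mul_div_cancel₀ _ hNpos.ne']; ring
    set S : Finset ℝ :=
      (Finset.univ.filter (fun j : Fin (N + 1) => Odd (j : ℕ))).image t with hS
    set x : ℝ → E := fun s => if s ∈ S then u else w with hx
    have hxt : ∀ j : Fin (N + 1), x (t j) = if Odd (j : ℕ) then u else w := by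
      intro j
      by_cases hj : Odd (j : ℕ)
      · have : t j ∈ S := Finset.mem_image_of_mem t (by simp [hj])
        simp [hx, this, hj]
      · have hnot : t j ∉ S := by
          simp only [hS, Finset.mem_image, Finset.mem_filter, Finset.mem_univ, true_and]
          rintro ⟨j', hj', hte⟩
          exact hj (ht.injective hte ▸ hj')
        simp [hx, hnot, hj]
    have hxa : x a = w := by
      have := hxt 0
      rw [h0] at this
      simpa using this
    have hxfin : pVar p a b x ≠ ⊤ := step_pVar_ne_top p a b (lt_of_lt_of_le one_pos hp) S u w
    have hVfin : pVar q a b (fun s => f (x s)) ≠ ⊤ := hf x hxfin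
    -- lower bound on pVar q of f ∘ x
    have hterm : ∀ i : Fin N,
        (‖f (x (t i.succ)) - f (x (t i.castSucc))‖₊ : ℝ≥0∞) ^ q
          = (‖f u - f w‖₊ : ℝ≥0∞) ^ q := by
      intro i
      have hsucc : ((i.succ : Fin (N + 1)) : ℕ) = (i : ℕ) + 1 := rfl
      have hcast : ((i.castSucc : Fin (N + 1)) : ℕ) = (i : ℕ) := rfl
      rw [hxt, hxt, hsucc, hcast]
      by_cases hi : Odd (i : ℕ)
      · have h1 : ¬ Odd ((i : ℕ) + 1) := fun h => (Nat.odd_add_one.mp h) hi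
        rw [if_neg h1, if_pos hi, ← neg_sub (f u) (f w), nnnorm_neg]
      · have h1 : Odd ((i : ℕ) + 1) := Nat.odd_add_one.mpr hi
        rw [if_pos h1, if_neg hi]
    have hlow : ((N : ℝ≥0∞)) * (‖f u - f w‖₊ : ℝ≥0∞) ^ q ≤ pVar q a b (fun s => f (x s)) := by
      have := le_pVar_aux q a b (fun s => f (x s)) N t ht h0 hl
      calc ((N : ℝ≥0∞)) * (‖f u - f w‖₊ : ℝ≥0∞) ^ q
          = ∑ _i : Fin N, (‖f u - f w‖₊ : ℝ≥0∞) ^ q := by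
            rw [Finset.sum_const, nsmul_eq_mul]; simp
        _ = ∑ i : Fin N, (‖f (x (t i.succ)) - f (x (t i.castSucc))‖₊ : ℝ≥0∞) ^ q :=
            (Finset.sum_congr rfl fun i _ => (hterm i).symm)
        _ ≤ pVar q a b (fun s => f (x s)) := this
    -- pass to reals
    have hIneqR : (N : ℝ) * d ^ q ≤ (pVar q a b (fun s => f (x s))).toReal := by
      have h1 := ENNReal.toReal_mono hVfin hlow
      have h2 : (((N : ℝ≥0∞)) * (‖f u - f w‖₊ : ℝ≥0∞) ^ q).toReal = (N : ℝ) * d ^ q := by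
        rw [ENNReal.toReal_mul, ← ENNReal.toReal_rpow]
        simp [hd]
      rwa [h2] at h1
    have hMx := hM x hxfin
    rw [hxa] at hMx
    have hC : (pVar q a b (fun s => f (x s))).toReal ^ (1 / q) ≤ M - ‖f w‖ := by linarith
    have hrpow : ((N : ℝ) * d ^ q) ^ (1 / q)
        ≤ (pVar q a b (fun s => f (x s))).toReal ^ (1 / q) := by
      apply Real.rpow_le_rpow (by positivity) hIneqR (by positivity)
    have hfin : ((N : ℝ) * d ^ q) ^ (1 / q) ≤ M - ‖f w‖ := hrpow.trans hC
    have hCnn : 0 ≤ M - ‖f w‖ := le_trans (by positivity) hfin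
    have := Real.rpow_le_rpow (by positivity) hfin hq.le
    rwa [← Real.rpow_mul (by positivity), one_div, inv_mul_cancel₀ hq.ne',
      Real.rpow_one] at this
  -- derive contradiction
  obtain ⟨n, hn⟩ := exists_nat_gt ((M - ‖f w‖) ^ q / d ^ q)
  have hdq : (0:ℝ) < d ^ q := Real.rpow_pos_of_pos hdpos q
  have h1 := main n
  have h2 : ((2 * n + 1 : ℕ) : ℝ) * d ^ q ≤ (M - ‖f w‖) ^ q := h1
  have h3 : (n : ℝ) ≤ ((2 * n + 1 : ℕ) : ℝ) := by push_cast; linarith [Nat.cast_nonneg (α := ℝ) n]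
  have h4 : (M - ‖f w‖) ^ q / d ^ q < (n : ℝ) := hn
  have h5 : (M - ‖f w‖) ^ q < (n : ℝ) * d ^ q := (div_lt_iff₀ hdq).mp h4
  nlinarith [mul_le_mul_of_nonneg_right h3 hdq.le]
end

section
/- Let E be a normed space, u, w ∈ E, p ≥ 1, m ∈ ℕ, and let a < a₁ < a₂ < ... < a_m < b. Define x : [a,b] → E by x(t) = u if t = a_k for some k, and x(t) = w otherwise. Then var_p(x,[a,b]) ≤ 2m‖u-w‖^p. -/
open scoped ENNReal NNReal

/-- Let `a < a₁ < … < a_m < b` and let `x` equal `u` at the points `aₖ` and `w`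
elsewhere. Then `var_p(x, [a,b]) ≤ 2 m ‖u - w‖^p`. -/
theorem pVar_two_valued_le {E : Type*} [NormedAddCommGroup E]
    (p a b : ℝ) (hp : 1 ≤ p) (u w : E) (m : ℕ)
    (pts : Fin m → ℝ) (hmono : StrictMono pts) (hin : ∀ k, a < pts k ∧ pts k < b)
    (x : ℝ → E) (hxdef : ∀ t : ℝ, x t = if ∃ k, t = pts k then u else w) :
    pVar p a b x ≤ (2 * m : ℝ≥0∞) * (‖u - w‖₊ : ℝ≥0∞) ^ p := by
  classical
  rw [pVar]
  refine iSup_le fun n => iSup_le fun t => iSup_le fun ht => iSup_le fun h0 => iSup_le fun hl => ?_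
  have hp0 : (0:ℝ) < p := lt_of_lt_of_le one_pos hp
  set B : ℝ≥0∞ := (‖u - w‖₊ : ℝ≥0∞) ^ p with hB
  set S : Finset (Fin n) := Finset.univ.filter (fun i => x (t i.succ) ≠ x (t i.castSucc)) with hS
  have hval : ∀ s : ℝ, x s = u ∨ x s = w := by
    intro s; rw [hxdef]; split <;> simp
  have hterm : ∀ i : Fin n,
      (‖x (t i.succ) - x (t i.castSucc)‖₊ : ℝ≥0∞) ^ p ≤ if i ∈ S then B else 0 := by
    intro i
    by_cases h : i ∈ S
    · have h' : x (t i.succ) ≠ x (t i.castSucc) := by simpa [hS] using h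
      have key : ‖x (t i.succ) - x (t i.castSucc)‖₊ = ‖u - w‖₊ := by
        rcases hval (t i.succ) with h1 | h1 <;> rcases hval (t i.castSucc) with h2 | h2
        · exact absurd (h1.trans h2.symm) h'
        · rw [h1, h2]
        · rw [h1, h2, ← neg_sub u w, nnnorm_neg]
        · exact absurd (h1.trans h2.symm) h'
      rw [key, if_pos h]
    · have h' : x (t i.succ) = x (t i.castSucc) := by
        by_contra hc; exact h (by simp [hS, hc])
      rw [if_neg h, h']
      simp [ENNReal.zero_rpow_of_pos hp0]
  have hone : ∀ i ∈ S, ((∃ k, t i.succ = pts k) ∧ ¬ ∃ k, t i.castSucc = pts k) ∨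
      ((¬ ∃ k, t i.succ = pts k) ∧ ∃ k, t i.castSucc = pts k) := by
    intro i hi
    have h' : x (t i.succ) ≠ x (t i.castSucc) := by simpa [hS] using hi
    rw [hxdef, hxdef] at h'
    by_cases h1 : ∃ k, t i.succ = pts k <;> by_cases h2 : ∃ k, t i.castSucc = pts k <;>
      simp_all
  have hcard : S.card ≤ 2 * m := by
    rcases Nat.eq_zero_or_pos m with hm | hm
    · have hSe : S = ∅ := by
        subst hm
        refine Finset.eq_empty_of_forall_notMem fun i hi => ?_
        rcases hone i hi with ⟨⟨k, _⟩, _⟩ | ⟨_, ⟨k, _⟩⟩ <;> exact k.elim0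
      simp [hSe]
    · set f : Fin n → Fin m × Bool := fun i =>
        if h : ∃ k, t i.succ = pts k then (h.choose, true)
        else if h' : ∃ k, t i.castSucc = pts k then (h'.choose, false)
        else (⟨0, hm⟩, true) with hf
      have hinj : Set.InjOn f S := by
        intro i hi j hj hfij
        rcases hone i hi with ⟨h1, h2⟩ | ⟨h1, h2⟩ <;> rcases hone j hj with ⟨g1, g2⟩ | ⟨g1, g2⟩
        · rw [hf] at hfij
          simp only [dif_pos h1, dif_pos g1, Prod.mk.injEq, and_true] at hfij
          have : t i.succ = t j.succ := by
            rw [h1.choose_spec, g1.choose_spec, hfij]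
          exact Fin.succ_injective n (ht.injective this)
        · exfalso
          rw [hf] at hfij
          simp only [dif_pos h1, dif_neg g1, dif_pos g2, Prod.mk.injEq] at hfij
          exact Bool.noConfusion hfij.2
        · exfalso
          rw [hf] at hfij
          simp only [dif_pos g1, dif_neg h1, dif_pos h2, Prod.mk.injEq] at hfij
          exact Bool.noConfusion hfij.2
        · rw [hf] at hfij
          simp only [dif_neg h1, dif_pos h2, dif_neg g1, dif_pos g2, Prod.mk.injEq, and_true] at hfij
          have : t i.castSucc = t j.castSucc := by
            rw [h2.choose_spec, g2.choose_spec, hfij]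
          exact Fin.castSucc_injective n (ht.injective this)
      calc S.card ≤ (Finset.univ : Finset (Fin m × Bool)).card :=
            Finset.card_le_card_of_injOn f (fun _ _ => Finset.mem_univ _) hinj
        _ = 2 * m := by simp [Finset.card_univ, mul_comm]
  calc ∑ i : Fin n, (‖x (t i.succ) - x (t i.castSucc)‖₊ : ℝ≥0∞) ^ p
      ≤ ∑ i : Fin n, (if i ∈ S then B else 0) := Finset.sum_le_sum fun i _ => hterm i
    _ = S.card • B := by rw [Finset.sum_ite_mem, Finset.univ_inter, Finset.sum_const]
    _ = (S.card : ℝ≥0∞) * B := by rw [nsmul_eq_mul]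
    _ ≤ (2 * m : ℝ≥0∞) * B := by
        gcongr
        exact_mod_cast hcard
end

section
/- Let E be a normed space, f : E → E, u, w ∈ E, p, q ≥ 1, m ∈ ℕ, and let a < b₁ < a₁ < b₂ < a₂ < ... < b_m < a_m < b. Define x : [a,b] → E by x(t) = u if t = a_k for some k and x(t) = w otherwise. Then var_q(f∘x, [a,b]) ≥ m·‖f(u)-f(w)‖^q. -/
open scoped ENNReal NNReal

private def gAux (a b : ℝ) (m : ℕ) (aa bb : Fin m → ℝ) : ℕ → ℝ := fun i =>
  if i = 0 then a else if i = 2*m+1 then b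
  else if i % 2 = 0 then (if h : i/2 - 1 < m then aa ⟨i/2-1, h⟩ else b)
  else (if h : i/2 < m then bb ⟨i/2, h⟩ else b)

private lemma gAux_zero (a b : ℝ) (m : ℕ) (aa bb : Fin m → ℝ) : gAux a b m aa bb 0 = a := rfl

private lemma gAux_last (a b : ℝ) (m : ℕ) (aa bb : Fin m → ℝ) :
    gAux a b m aa bb (2*m+1) = b := by
  simp [gAux]

private lemma gAux_even (a b : ℝ) (m : ℕ) (aa bb : Fin m → ℝ) (k : ℕ) (hk : k < m) :
    gAux a b m aa bb (2*k+2) = aa ⟨k, hk⟩ := by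
  have h0 : 2*k+2 ≠ 0 := by omega
  have h1 : 2*k+2 ≠ 2*m+1 := by omega
  have h2 : (2*k+2) % 2 = 0 := by omega
  have h3 : (2*k+2)/2 - 1 = k := by omega
  simp [gAux, h0, h1, h2, h3, hk]

private lemma gAux_odd (a b : ℝ) (m : ℕ) (aa bb : Fin m → ℝ) (k : ℕ) (hk : k < m) :
    gAux a b m aa bb (2*k+1) = bb ⟨k, hk⟩ := by
  have h0 : 2*k+1 ≠ 0 := by omega
  have h1 : 2*k+1 ≠ 2*m+1 := by omega
  have h2 : (2*k+1) % 2 = 1 := by omega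
  have h3 : (2*k+1)/2 = k := by omega
  simp [gAux, h0, h1, h2, h3, hk, hk.ne]

/-- Let `a < b₁ < a₁ < b₂ < a₂ < … < b_m < a_m < b` and let `x` equal `u` at the points
`aₖ` and `w` elsewhere. Then `var_q(f ∘ x, [a,b]) ≥ m ‖f u - f w‖^q`. -/
theorem pVar_comp_two_valued_ge {E : Type*} [NormedAddCommGroup E]
    (p q a b : ℝ) (hp : 1 ≤ p) (hq : 1 ≤ q) (f : E → E) (u w : E) (m : ℕ)
    (aa bb : Fin m → ℝ)
    (h1 : ∀ k, a < bb k ∧ bb k < aa k ∧ aa k < b)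
    (h2 : ∀ i j : Fin m, i < j → aa i < bb j)
    (x : ℝ → E) (hxdef : ∀ t : ℝ, x t = if ∃ k, t = aa k then u else w) :
    (m : ℝ≥0∞) * (‖f u - f w‖₊ : ℝ≥0∞) ^ q ≤ pVar q a b (fun t => f (x t)) := by
  rcases Nat.eq_zero_or_pos m with hm | hm
  · subst hm; simp
  -- basic order facts
  have haabb : ∀ k j : Fin m, k ≤ j → bb k < aa j := by
    intro k j hkj
    rcases eq_or_lt_of_le hkj with h | h
    · subst h; exact (h1 k).2.1
    · exact lt_trans (lt_trans (h1 k).2.1 (h2 k j h)) (h1 j).2.1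
  -- value facts
  have hxu : ∀ k : Fin m, x (aa k) = u := by
    intro k; rw [hxdef]; exact if_pos ⟨k, rfl⟩
  have hxw : ∀ t : ℝ, (∀ k : Fin m, t ≠ aa k) → x t = w := by
    intro t ht; rw [hxdef, if_neg]; rintro ⟨k, rfl⟩; exact ht k rfl
  have hxa : x a = w := hxw a (fun k => ne_of_lt (lt_trans (h1 k).1 (h1 k).2.1))
  have hxb : x b = w := hxw b (fun k => (ne_of_lt (h1 k).2.2).symm)
  have hxbb : ∀ k : Fin m, x (bb k) = w := by
    intro k
    refine hxw _ (fun j => ?_)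
    rcases le_or_gt k j with h | h
    · exact ne_of_lt (haabb k j h)
    · exact (ne_of_lt (h2 j k h)).symm
  set n := 2*m+1 with hn
  set g := gAux a b m aa bb with hg
  set t : Fin (n+1) → ℝ := fun i => g i.val with htdef
  have ht0 : t 0 = a := by simp [htdef, hg, gAux_zero]
  have htl : t (Fin.last n) = b := by
    simp only [htdef, Fin.val_last, hn]; exact gAux_last a b m aa bb
  have hmono : StrictMono t := by
    rw [Fin.strictMono_iff_lt_succ]
    intro i
    have hi : (i : ℕ) < n := i.isLt
    have hsucc : ((i.succ : Fin (n+1)) : ℕ) = (i : ℕ) + 1 := rfl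
    have hcast : ((i.castSucc : Fin (n+1)) : ℕ) = (i : ℕ) := rfl
    simp only [htdef, hsucc, hcast, hg]
    rcases Nat.even_or_odd (i : ℕ) with ⟨k, hk⟩ | ⟨k, hk⟩
    · rcases Nat.eq_zero_or_pos k with hk0 | hk0
      · have h01 : (i : ℕ) = 0 := by omega
        have hkm : 0 < m := hm
        rw [h01, show (0:ℕ)+1 = 2*0+1 from rfl,
          gAux_zero, gAux_odd a b m aa bb 0 hkm]
        exact (h1 _).1
      · have hi2 : (i:ℕ) < 2*m+1 := by rw [← hn]; exact hi
        have hkm : k ≤ m := by omega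
        rcases eq_or_lt_of_le hkm with hke | hke
        · have hm1 : m - 1 < m := by omega
          rw [show (i:ℕ) = 2*(m-1)+2 from by omega,
            show 2*(m-1)+2+1 = 2*m+1 from by omega,
            gAux_even a b m aa bb (m-1) hm1, gAux_last]
          exact (h1 _).2.2
        · have hk1 : k - 1 < m := by omega
          rw [show (i:ℕ) = 2*(k-1)+2 from by omega,
            show 2*(k-1)+2+1 = 2*k+1 from by omega,
            gAux_even a b m aa bb (k-1) hk1, gAux_odd a b m aa bb k hke]
          exact h2 _ _ (by simp only [Fin.lt_def]; omega)
    · have hi2 : (i:ℕ) < 2*m+1 := by rw [← hn]; exact hi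
      have hkm : k < m := by omega
      rw [hk, show 2*k+1+1 = 2*k+2 from by omega,
        gAux_odd a b m aa bb k hkm, gAux_even a b m aa bb k hkm]
      exact (h1 _).2.1
  -- value of terms
  set c : ℝ≥0∞ := (‖f u - f w‖₊ : ℝ≥0∞) ^ q with hc
  set F : Fin n → ℝ≥0∞ := fun i => (‖f (x (t i.succ)) - f (x (t i.castSucc))‖₊ : ℝ≥0∞) ^ q with hF
  have hφinj : Function.Injective (fun k : Fin m => (⟨2*(k:ℕ)+1, by omega⟩ : Fin n)) := by
    intro k1 k2 h
    have := congrArg (Fin.val) h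
    simp only [Fin.val_mk] at this
    exact Fin.ext (by omega)
  set φ : Fin m ↪ Fin n := ⟨fun k => ⟨2*(k:ℕ)+1, by omega⟩, hφinj⟩ with hφ
  have key : ∀ k : Fin m, F (φ k) = c := by
    intro k
    have hkm : (k : ℕ) < m := k.isLt
    have hsucc : (((φ k).succ : Fin (n+1)) : ℕ) = 2*(k:ℕ)+2 := rfl
    have hcast : (((φ k).castSucc : Fin (n+1)) : ℕ) = 2*(k:ℕ)+1 := rfl
    have e1 : t (φ k).succ = aa ⟨(k:ℕ), hkm⟩ := by
      simp only [htdef, hsucc]; exact gAux_even a b m aa bb _ hkm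
    have e2 : t (φ k).castSucc = bb ⟨(k:ℕ), hkm⟩ := by
      simp only [htdef, hcast]; exact gAux_odd a b m aa bb _ hkm
    simp only [hF, e1, e2, hxu, hxbb, hc]
  -- assemble
  have hsum : (m : ℝ≥0∞) * c ≤ ∑ i : Fin n, F i := by
    calc (m : ℝ≥0∞) * c = ∑ k : Fin m, F (φ k) := by
          simp [key, Finset.sum_const, nsmul_eq_mul]
      _ = ∑ i ∈ Finset.univ.map φ, F i := by rw [Finset.sum_map]
      _ ≤ ∑ i : Fin n, F i := Finset.sum_le_sum_of_subset (Finset.subset_univ _)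
  refine le_trans hsum ?_
  rw [pVar]
  exact le_iSup_of_le n (le_iSup_of_le t (le_iSup_of_le hmono (le_iSup_of_le ht0
    (le_iSup_of_le htl le_rfl))))
end
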